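/- arXiv:1603.03908 — 6 statements merged into one kernel-verified Lean document; each statement's English description precedes it below -/
import Mathlib

section
/- Let U and W be disjoint sets with |U| odd and |W| even, and let L be a subgraph of K_{U∪W} - K_U with exactly μ pure edges, where μ ∈ {1,2}, such that every vertex of L has positive even degree. If |E(L)| ≤ 2(|U|+1) and some vertex of U has degree at least 4 in L, then there is a vertex x ∈ U with x ∉ V(L). -/
open SimpleGraph

/-- The complete graph on the vertex type with all edges inside `U` removed:
`K_{U ∪ W} - K_U` when `U ∪ W` is the whole vertex set. -/
def holeGraphOn {V : Type*} (U : Set V) : SimpleGraph V where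
  Adj x y := x ≠ y ∧ ¬ (x ∈ U ∧ y ∈ U)
  symm := ⟨fun x y ⟨h1, h2⟩ => ⟨h1.symm, fun h => h2 ⟨h.2, h.1⟩⟩⟩
  loopless := ⟨fun x ⟨h, _⟩ => h rfl⟩

/-- `x` and `y` are twin vertices of `G`. -/
def IsTwin {V : Type*} (G : SimpleGraph V) (x y : V) : Prop :=
  G.neighborSet x \ {y} = G.neighborSet y \ {x}

theorem stmt7 {V : Type*} [Fintype V] (U W : Set V)
    (hdisj : Disjoint U W) (hcover : U ∪ W = Set.univ)
    (hUodd : Odd U.ncard) (hWeven : Even W.ncard)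
    (L : SimpleGraph V)
    (hsub : ∀ x y, L.Adj x y → ¬ (x ∈ U ∧ y ∈ U))
    (μ : ℕ) (hμ : μ = 1 ∨ μ = 2)
    (hpure : {e ∈ L.edgeSet | ∀ v ∈ e, v ∈ W}.ncard = μ)
    (heven : ∀ v, Even (L.neighborSet v).ncard)
    (hE : L.edgeSet.ncard ≤ 2 * (U.ncard + 1))
    (hdeg : ∃ x ∈ U, 4 ≤ (L.neighborSet x).ncard) :
    ∃ x ∈ U, x ∉ L.support := by
  classical
  by_contra hcon
  push_neg at hcon
  -- every vertex of U has degree ≥ 2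
  have hdeg2 : ∀ u ∈ U, 2 ≤ (L.neighborSet u).ncard := by
    intro u hu
    have hpos : (L.neighborSet u).ncard ≠ 0 := by
      obtain ⟨y, hy⟩ := hcon u hu
      have hyn : y ∈ L.neighborSet u := hy
      intro h0
      rw [Set.ncard_eq_zero (Set.toFinite _)] at h0
      rw [h0] at hyn
      exact hyn
    obtain ⟨k, hk⟩ := heven u
    omega
  set SU : Finset V := (Set.toFinite U).toFinset with hSU
  have hmemSU : ∀ u, u ∈ SU ↔ u ∈ U := by
    intro u; rw [hSU, Set.Finite.mem_toFinset]
  -- incidence finsets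
  set f : V → Finset (Sym2 V) := fun u => (L.incidenceSet u).toFinite.toFinset with hf
  have hmemf : ∀ u e, e ∈ f u ↔ e ∈ L.incidenceSet u := by
    intro u e; rw [hf]; exact Set.Finite.mem_toFinset _
  have hcardf : ∀ u, (f u).card = (L.neighborSet u).ncard := by
    intro u
    rw [hf, ← Set.ncard_eq_toFinset_card, ← Nat.card_coe_set_eq,
      ← Nat.card_coe_set_eq]
    exact Nat.card_congr (L.incidenceSetEquivNeighborSet u)
  -- pairwise disjoint
  have hdisjf : ∀ u ∈ SU, ∀ v ∈ SU, u ≠ v → Disjoint (f u) (f v) := by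
    intro u hu v hv huv
    rw [Finset.disjoint_left]
    intro e heu hev
    have h1 := (hmemf u e).mp heu
    have h2 := (hmemf v e).mp hev
    have := L.incidenceSet_inter_incidenceSet_subset huv ⟨h1, h2⟩
    rw [Set.mem_singleton_iff] at this
    subst this
    have : L.Adj u v := h1.1
    exact hsub u v this ⟨(hmemSU u).mp hu, (hmemSU v).mp hv⟩
  set C : Finset (Sym2 V) := SU.biUnion f with hC
  have hcardC : C.card = ∑ u ∈ SU, (L.neighborSet u).ncard := by
    rw [hC, Finset.card_biUnion hdisjf]
    exact Finset.sum_congr rfl fun u _ => hcardf u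
  -- pure edges
  set P : Finset (Sym2 V) := {e ∈ L.edgeSet | ∀ v ∈ e, v ∈ W}.toFinite.toFinset with hP
  have hcardP : P.card = μ := by
    rw [hP, ← Set.ncard_eq_toFinset_card]; exact hpure
  set E : Finset (Sym2 V) := L.edgeSet.toFinite.toFinset with hEf
  have hcardE : E.card = L.edgeSet.ncard := by
    rw [hEf, ← Set.ncard_eq_toFinset_card]
  -- E = C ∪ P, disjoint
  have hsplit : E = C ∪ P := by
    ext e
    simp only [hEf, hC, hP, Set.Finite.mem_toFinset, Finset.mem_union, Finset.mem_biUnion]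
    constructor
    · intro he
      by_cases hp : ∀ v ∈ e, v ∈ W
      · exact Or.inr ⟨he, hp⟩
      · push_neg at hp
        obtain ⟨v, hve, hvW⟩ := hp
        have hvU : v ∈ U := by
          have : v ∈ U ∪ W := hcover ▸ Set.mem_univ v
          rcases this with h | h
          · exact h
          · exact absurd h hvW
        exact Or.inl ⟨v, (hmemSU v).mpr hvU, (hmemf v e).mpr ⟨he, hve⟩⟩
    · rintro (⟨u, _, he⟩ | ⟨he, _⟩)
      · exact ((hmemf u e).mp he).1
      · exact he
  have hdisjCP : Disjoint C P := by
    rw [Finset.disjoint_left]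
    intro e heC heP
    simp only [hC, Finset.mem_biUnion] at heC
    obtain ⟨u, hu, heu⟩ := heC
    have h1 := (hmemf u e).mp heu
    have h2 : ∀ v ∈ e, v ∈ W := by
      have := (Set.Finite.mem_toFinset _).mp heP
      exact this.2
    have huW : u ∈ W := h2 u h1.2
    exact absurd ((hmemSU u).mp hu) (fun h => hdisj.ne_of_mem h huW rfl)
  have hcards : E.card = C.card + P.card := by
    rw [hsplit, Finset.card_union_of_disjoint hdisjCP]
  -- sum lower bound
  obtain ⟨x, hxU, hx4⟩ := hdeg
  have hxSU : x ∈ SU := (hmemSU x).mpr hxU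
  have hsumbound : 2 * SU.card + 2 ≤ ∑ u ∈ SU, (L.neighborSet u).ncard := by
    rw [← Finset.add_sum_erase _ _ hxSU]
    have h1 : 2 * (SU.erase x).card ≤ ∑ u ∈ SU.erase x, (L.neighborSet u).ncard := by
      calc 2 * (SU.erase x).card = ∑ _u ∈ SU.erase x, 2 := by
            rw [Finset.sum_const, smul_eq_mul, mul_comm]
          _ ≤ _ := Finset.sum_le_sum fun u hu =>
            hdeg2 u ((hmemSU u).mp (Finset.mem_of_mem_erase hu))
    have h2 : (SU.erase x).card = SU.card - 1 := Finset.card_erase_of_mem hxSU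
    have h3 : 1 ≤ SU.card := Finset.card_pos.mpr ⟨x, hxSU⟩
    omega
  have hUcard : SU.card = U.ncard := by
    rw [hSU, ← Set.ncard_eq_toFinset_card]
  have hμ1 : 1 ≤ μ := by omega
  omega
end

section
/- Let U and W be disjoint sets with |U| odd and |W| even, and let L be a subgraph of K_{U∪W} - K_U with exactly μ ∈ {1,2} pure edges such that every vertex of L has positive even degree. Suppose |E(L)| ≤ min(2(|U|+2), 2|W|+1, |U|+|W|). If L contains either at least two vertices of degree 4 or at least one vertex of degree at least 6, then there exist twin vertices x and y in K_{U∪W} - K_U with deg_L(x) ≥ 4 and y ∉ V(L). -/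
open SimpleGraph

theorem stmt8 {V : Type*} [Fintype V] (U W : Set V)
    (hdisj : Disjoint U W) (hcover : U ∪ W = Set.univ)
    (hUodd : Odd U.ncard) (hWeven : Even W.ncard)
    (L : SimpleGraph V)
    (hsub : ∀ x y, L.Adj x y → ¬ (x ∈ U ∧ y ∈ U))
    (μ : ℕ) (hμ : μ = 1 ∨ μ = 2)
    (hpure : {e ∈ L.edgeSet | ∀ v ∈ e, v ∈ W}.ncard = μ)
    (heven : ∀ v, Even (L.neighborSet v).ncard)
    (hE1 : L.edgeSet.ncard ≤ 2 * (U.ncard + 2))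
    (hE2 : L.edgeSet.ncard ≤ 2 * W.ncard + 1)
    (hE3 : L.edgeSet.ncard ≤ U.ncard + W.ncard)
    (hbig : (∃ x x', x ≠ x' ∧ (L.neighborSet x).ncard = 4 ∧ (L.neighborSet x').ncard = 4) ∨
            (∃ x, 6 ≤ (L.neighborSet x).ncard)) :
    ∃ x y, IsTwin (holeGraphOn U) x y ∧ 4 ≤ (L.neighborSet x).ncard ∧ y ∉ L.support := by
  classical
  -- basic membership facts
  have hmemW : ∀ v : V, v ∉ U → v ∈ W := by
    intro v hv
    have : v ∈ U ∪ W := hcover.symm ▸ Set.mem_univ v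
    exact this.resolve_left hv
  have hmemU : ∀ v : V, v ∈ W → v ∉ U := fun v hv hu => Set.disjoint_left.mp hdisj hu hv
  -- twins
  have twinU : ∀ x y : V, x ∈ U → y ∈ U → IsTwin (holeGraphOn U) x y := by
    intro x y hx hy
    unfold IsTwin
    ext z
    simp only [Set.mem_diff, mem_neighborSet, Set.mem_singleton_iff]
    constructor
    · rintro ⟨⟨h1, h2⟩, h3⟩
      have hzU : z ∉ U := fun hz => h2 ⟨hx, hz⟩
      exact ⟨⟨fun h => hzU (h ▸ hy), fun h => hzU h.2⟩, fun h => hzU (h ▸ hx)⟩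
    · rintro ⟨⟨h1, h2⟩, h3⟩
      have hzU : z ∉ U := fun hz => h2 ⟨hy, hz⟩
      exact ⟨⟨fun h => hzU (h ▸ hx), fun h => hzU h.2⟩, fun h => hzU (h ▸ hy)⟩
  have twinW : ∀ x y : V, x ∉ U → y ∉ U → IsTwin (holeGraphOn U) x y := by
    intro x y hx hy
    unfold IsTwin
    ext z
    simp only [Set.mem_diff, mem_neighborSet, Set.mem_singleton_iff]
    constructor
    · rintro ⟨⟨h1, h2⟩, h3⟩
      exact ⟨⟨fun h => h3 h.symm, fun h => hy h.1⟩, fun h => h1 h.symm⟩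
    · rintro ⟨⟨h1, h2⟩, h3⟩
      exact ⟨⟨fun h => h3 h.symm, fun h => hx h.1⟩, fun h => h1 h.symm⟩
  -- ncard / Finset conversions
  have hdeg : ∀ v, (L.neighborSet v).ncard = L.degree v := by
    intro v
    rw [Set.ncard_eq_toFinset_card', degree]
    congr 1
  have hecard : L.edgeSet.ncard = L.edgeFinset.card := by
    rw [Set.ncard_eq_toFinset_card', edgeFinset]
  set uF : Finset V := U.toFinset with huF
  set wF : Finset V := W.toFinset with hwF
  have hcardU : uF.card = U.ncard := (Set.ncard_eq_toFinset_card' U).symm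
  have hcardW : wF.card = W.ncard := (Set.ncard_eq_toFinset_card' W).symm
  -- double counting : sum over a finset of degrees
  have hdc : ∀ A : Finset V,
      ∑ v ∈ A, L.degree v = ∑ e ∈ L.edgeFinset, (A.filter (· ∈ e)).card := by
    intro A
    have h : ∀ v, L.degree v = (L.edgeFinset.filter (v ∈ ·)).card := by
      intro v
      rw [← card_incidenceFinset_eq_degree, incidenceFinset_eq_filter]
    simp_rw [h, Finset.card_filter]
    exact Finset.sum_comm
  -- per-edge endpoint count in U
  have hedge : ∀ e ∈ L.edgeFinset,
      (uF.filter (· ∈ e)).card = if (∀ v ∈ e, v ∈ W) then 0 else 1 := by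
    intro e he
    induction e using Sym2.ind with
    | _ a b =>
      rw [mem_edgeFinset, mem_edgeSet] at he
      have hnab : ¬(a ∈ U ∧ b ∈ U) := hsub a b he
      have hne : a ≠ b := he.ne
      have hfil : uF.filter (· ∈ s(a, b)) = ({a, b} : Finset V).filter (· ∈ U) := by
        ext v
        simp only [Finset.mem_filter, Set.mem_toFinset, Sym2.mem_iff, Finset.mem_insert,
          Finset.mem_singleton, huF]
        tauto
      have hforall : (∀ v ∈ s(a, b), v ∈ W) ↔ (a ∈ W ∧ b ∈ W) := by
        constructor
        · intro h; exact ⟨h a (by simp), h b (by simp)⟩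
        · rintro ⟨ha, hb⟩ v hv
          rcases Sym2.mem_iff.mp hv with rfl | rfl <;> assumption
      rw [hfil]
      simp only [hforall]
      by_cases haU : a ∈ U
      · have hbU : b ∉ U := fun hb => hnab ⟨haU, hb⟩
        have : ({a, b} : Finset V).filter (· ∈ U) = {a} := by
          ext v
          simp only [Finset.mem_filter, Finset.mem_insert, Finset.mem_singleton]
          constructor
          · rintro ⟨rfl | rfl, hv⟩
            · rfl
            · exact absurd hv hbU
          · rintro rfl; exact ⟨Or.inl rfl, haU⟩
        rw [this, if_neg (fun h => hmemU a h.1 haU)]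
        simp
      · by_cases hbU : b ∈ U
        · have : ({a, b} : Finset V).filter (· ∈ U) = {b} := by
            ext v
            simp only [Finset.mem_filter, Finset.mem_insert, Finset.mem_singleton]
            constructor
            · rintro ⟨rfl | rfl, hv⟩
              · exact absurd hv haU
              · rfl
            · rintro rfl; exact ⟨Or.inr rfl, hbU⟩
          rw [this, if_neg (fun h => hmemU b h.2 hbU)]
          simp
        · have : ({a, b} : Finset V).filter (· ∈ U) = ∅ := by
            ext v
            simp only [Finset.mem_filter, Finset.mem_insert, Finset.mem_singleton,
              Finset.notMem_empty, iff_false]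
            rintro ⟨rfl | rfl, hv⟩
            · exact haU hv
            · exact hbU hv
          rw [this, if_pos ⟨hmemW a haU, hmemW b hbU⟩]
          simp
  -- number of pure edges
  have hpureF : (L.edgeFinset.filter (fun e => ∀ v ∈ e, v ∈ W)).card = μ := by
    rw [← hpure]
    have : {e ∈ L.edgeSet | ∀ v ∈ e, v ∈ W}
        = ↑(L.edgeFinset.filter (fun e => ∀ v ∈ e, v ∈ W)) := by
      ext e
      simp [Set.mem_setOf_eq, SimpleGraph.mem_edgeFinset]
    rw [this, Set.ncard_coe_finset]
  -- degree sum over U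
  have hsumU : ∑ v ∈ uF, L.degree v + μ = L.edgeFinset.card := by
    rw [hdc uF, Finset.sum_congr rfl hedge]
    have h0 : (∑ e ∈ L.edgeFinset, if (∀ v ∈ e, v ∈ W) then 0 else 1)
        = (L.edgeFinset.filter (fun e => ¬ ∀ v ∈ e, v ∈ W)).card := by
      rw [Finset.card_filter]
      exact Finset.sum_congr rfl (fun e _ => by
        by_cases h : ∀ v ∈ e, v ∈ W
        · rw [if_pos h, if_neg (not_not_intro h)]
        · rw [if_neg h, if_pos h])
    rw [h0]
    have h1 := Finset.card_filter_add_card_filter_not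
      (s := L.edgeFinset) (p := fun e => ∀ v ∈ e, v ∈ W)
    rw [hpureF] at h1
    omega
  -- handshake
  have hsumT : ∑ v ∈ uF, L.degree v + ∑ v ∈ wF, L.degree v = 2 * L.edgeFinset.card := by
    have hdisjF : Disjoint uF wF := by
      rw [Finset.disjoint_left]
      intro v hv hw
      exact hmemU v (by simpa [hwF] using hw) (by simpa [huF] using hv)
    have hunion : uF ∪ wF = Finset.univ := by
      ext v
      simp only [Finset.mem_union, Set.mem_toFinset, Finset.mem_univ, iff_true, huF, hwF]
      by_cases hv : v ∈ U
      · exact Or.inl hv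
      · exact Or.inr (hmemW v hv)
    rw [← Finset.sum_union hdisjF, hunion]
    exact L.sum_degrees_eq_twice_card_edges
  -- every support vertex has degree ≥ 2
  have hdeg2 : ∀ v ∈ L.support, 2 ≤ L.degree v := by
    intro v hv
    have hpos : 0 < L.degree v :=
      L.degree_pos_iff_exists_adj v |>.mpr (L.mem_support.mp hv)
    have hev : Even (L.degree v) := hdeg v ▸ heven v
    rcases hev with ⟨r, hr⟩
    omega
  -- key counting bound
  have key : ∀ A B : Finset V, B ⊆ A.filter (· ∈ L.support) →
      2 * (A.filter (· ∈ L.support)).card + ∑ v ∈ B, (L.degree v - 2)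
        ≤ ∑ v ∈ A, L.degree v := by
    intro A B hB
    set T := A.filter (· ∈ L.support) with hT
    have hT2 : ∀ v ∈ T, 2 ≤ L.degree v := fun v hv =>
      hdeg2 v (Finset.mem_filter.mp hv).2
    calc 2 * T.card + ∑ v ∈ B, (L.degree v - 2)
        = ∑ _v ∈ T, 2 + ∑ v ∈ B, (L.degree v - 2) := by
          rw [Finset.sum_const, smul_eq_mul, mul_comm]
      _ ≤ ∑ _v ∈ T, 2 + ∑ v ∈ T, (L.degree v - 2) := by
          exact Nat.add_le_add_left (Finset.sum_le_sum_of_subset hB) _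
      _ = ∑ v ∈ T, (2 + (L.degree v - 2)) := (Finset.sum_add_distrib).symm
      _ = ∑ v ∈ T, L.degree v :=
          Finset.sum_congr rfl (fun v hv => by have := hT2 v hv; omega)
      _ ≤ ∑ v ∈ A, L.degree v :=
          Finset.sum_le_sum_of_subset (Finset.filter_subset _ _)
  -- finisher
  have main : ∀ (A B : Finset V) (x : V), x ∈ B → B ⊆ A →
      (∀ v ∈ B, 4 ≤ L.degree v) →
      (∀ p q : V, p ∈ A → q ∈ A → IsTwin (holeGraphOn U) p q) →
      (∑ v ∈ A, L.degree v < 2 * A.card + ∑ v ∈ B, (L.degree v - 2)) →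
      ∃ x y, IsTwin (holeGraphOn U) x y ∧ 4 ≤ (L.neighborSet x).ncard ∧ y ∉ L.support := by
    intro A B x hxB hBA h4 htwin hlt
    have hBsub : B ⊆ A.filter (· ∈ L.support) := by
      intro v hv
      refine Finset.mem_filter.mpr ⟨hBA hv, ?_⟩
      rw [SimpleGraph.mem_support]
      exact (L.degree_pos_iff_exists_adj v).mp (by have := h4 v hv; omega)
    have hk := key A B hBsub
    have hcard : (A.filter (· ∈ L.support)).card < A.card := by omega
    have hne : A.filter (· ∈ L.support) ≠ A := by
      intro h
      rw [h] at hcard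
      omega
    obtain ⟨y, hyA, hyT⟩ :=
      Finset.exists_of_ssubset ((Finset.filter_subset _ _).ssubset_of_ne hne)
    have hyS : y ∉ L.support := fun hy => hyT (Finset.mem_filter.mpr ⟨hyA, hy⟩)
    exact ⟨x, y, htwin x y (hBA hxB) hyA, by rw [hdeg]; exact h4 x hxB, hyS⟩
  -- side twin providers
  have htwinUF : ∀ p q : V, p ∈ uF → q ∈ uF → IsTwin (holeGraphOn U) p q := by
    intro p q hp hq
    exact twinU p q (by simpa [huF] using hp) (by simpa [huF] using hq)
  have htwinWF : ∀ p q : V, p ∈ wF → q ∈ wF → IsTwin (holeGraphOn U) p q := by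
    intro p q hp hq
    exact twinW p q (hmemU p (by simpa [hwF] using hp)) (hmemU q (by simpa [hwF] using hq))
  -- abbreviations for arithmetic
  rw [hecard] at hE1 hE2 hE3
  rw [← hcardU] at hE1 hE3
  rw [← hcardW] at hE2 hE3
  set m := L.edgeFinset.card with hm
  set sU := ∑ v ∈ uF, L.degree v with hsU
  set sW := ∑ v ∈ wF, L.degree v with hsW
  have hmemuF : ∀ v : V, v ∈ U → v ∈ uF := fun v hv => by simpa [huF] using hv
  have hmemwF : ∀ v : V, v ∈ W → v ∈ wF := fun v hv => by simpa [hwF] using hv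
  simp only [hdeg] at hbig
  rcases hbig with ⟨x, x', hne, hx4, hx4'⟩ | ⟨x, hx6⟩
  · -- two degree-4 vertices
    by_cases hxU : x ∈ U
    · by_cases hx'U : x' ∈ U
      · -- both in U
        refine main uF {x, x'} x (by simp) ?_ ?_ htwinUF ?_
        · intro v hv
          rcases Finset.mem_insert.mp hv with rfl | hv
          · exact hmemuF v hxU
          · exact hmemuF v ((Finset.mem_singleton.mp hv) ▸ hx'U)
        · intro v hv
          rcases Finset.mem_insert.mp hv with rfl | hv
          · omega
          · rw [Finset.mem_singleton.mp hv]; omega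
        · rw [Finset.sum_pair hne, hx4, hx4']
          omega
      · -- x ∈ U, x' ∈ W : mixed
        by_cases hcase : sU < 2 * uF.card + (L.degree x - 2)
        · refine main uF {x} x (by simp) (by simp [hmemuF x hxU]) ?_ htwinUF ?_
          · intro v hv; rw [Finset.mem_singleton.mp hv]; omega
          · rw [Finset.sum_singleton]; omega
        · refine main wF {x'} x' (by simp) (by simp [hmemwF x' (hmemW x' hx'U)]) ?_ htwinWF ?_
          · intro v hv; rw [Finset.mem_singleton.mp hv]; omega
          · rw [Finset.sum_singleton]; omega
    · by_cases hx'U : x' ∈ U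
      · -- x ∈ W, x' ∈ U : mixed (symmetric)
        by_cases hcase : sU < 2 * uF.card + (L.degree x' - 2)
        · refine main uF {x'} x' (by simp) (by simp [hmemuF x' hx'U]) ?_ htwinUF ?_
          · intro v hv; rw [Finset.mem_singleton.mp hv]; omega
          · rw [Finset.sum_singleton]; omega
        · refine main wF {x} x (by simp) (by simp [hmemwF x (hmemW x hxU)]) ?_ htwinWF ?_
          · intro v hv; rw [Finset.mem_singleton.mp hv]; omega
          · rw [Finset.sum_singleton]; omega
      · -- both in W
        refine main wF {x, x'} x (by simp) ?_ ?_ htwinWF ?_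
        · intro v hv
          rcases Finset.mem_insert.mp hv with rfl | hv
          · exact hmemwF v (hmemW v hxU)
          · exact hmemwF v ((Finset.mem_singleton.mp hv) ▸ (hmemW x' hx'U))
        · intro v hv
          rcases Finset.mem_insert.mp hv with rfl | hv
          · omega
          · rw [Finset.mem_singleton.mp hv]; omega
        · rw [Finset.sum_pair hne, hx4, hx4']
          omega
  · -- one degree ≥ 6 vertex
    by_cases hxU : x ∈ U
    · refine main uF {x} x (by simp) (by simp [hmemuF x hxU]) ?_ htwinUF ?_
      · intro v hv; rw [Finset.mem_singleton.mp hv]; omega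
      · rw [Finset.sum_singleton]; omega
    · refine main wF {x} x (by simp) (by simp [hmemwF x (hmemW x hxU)]) ?_ htwinWF ?_
      · intro v hv; rw [Finset.mem_singleton.mp hv]; omega
      · rw [Finset.sum_singleton]; omega
end

section
/- Let U and W be disjoint sets with |U| odd and |W| even, and let G be a subgraph of K_{U∪W} - K_U containing exactly μ pure edges, such that G has exactly one vertex of degree 4 and every other vertex of G has degree 2. Then the number of connected components of G is at most ⌊(|E(G)| + μ)/4⌋ - 1. -/
open SimpleGraph

/-- The connected components of  containing at least one edge. -/
def nontrivialComponents {V : Type*} (G : SimpleGraph V) : Set G.ConnectedComponent :=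
  {C | ∃ x y, G.Adj x y ∧ G.connectedComponentMk x = C}


/-- Edges of `G` lying inside the connected component `C`. -/
def compEdges {V : Type*} (G : SimpleGraph V) (C : G.ConnectedComponent) : Set (Sym2 V) :=
  {e ∈ G.edgeSet | ∀ v ∈ e, G.connectedComponentMk v = C}

/-- Pure edges of `G` (both ends in `W`) lying inside the component `C`. -/
def compPure {V : Type*} (W : Set V) (G : SimpleGraph V) (C : G.ConnectedComponent) :
    Set (Sym2 V) :=
  {e ∈ compEdges G C | ∀ v ∈ e, v ∈ W}

lemma mem_compEdges {V : Type*} {G : SimpleGraph V} {x y : V} (h : G.Adj x y)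
    {C : G.ConnectedComponent} (hx : G.connectedComponentMk x = C) :
    s(x, y) ∈ compEdges G C := by
  refine ⟨h, ?_⟩
  intro v hv
  rw [Sym2.mem_iff] at hv
  rcases hv with rfl | rfl
  · exact hx
  · exact (ConnectedComponent.connectedComponentMk_eq_of_adj h).symm.trans hx

lemma compEdges_disjoint {V : Type*} {G : SimpleGraph V} {C D : G.ConnectedComponent}
    (h : C ≠ D) : Disjoint (compEdges G C) (compEdges G D) := by
  rw [Set.disjoint_left]
  rintro e ⟨he, hC⟩ ⟨-, hD⟩
  induction e with
  | h x y =>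
    exact h ((hC x (Sym2.mem_mk_left x y)).symm.trans (hD x (Sym2.mem_mk_left x y)))

/-- A pairwise disjoint family of subsets of a finite set has total size at most the size
of the ambient set. -/
lemma sum_ncard_le {ι α : Type*} [Finite α] (t : Finset ι) (f : ι → Set α) (s : Set α)
    (hsub : ∀ i ∈ t, f i ⊆ s)
    (hdisj : ∀ i ∈ t, ∀ j ∈ t, i ≠ j → Disjoint (f i) (f j)) :
    ∑ i ∈ t, (f i).ncard ≤ s.ncard := by
  classical
  have key : ∑ i ∈ t, (f i).ncard = (⋃ i ∈ t, f i).ncard := by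
    induction t using Finset.cons_induction with
    | empty => simp
    | cons a t ha ih =>
      rw [Finset.sum_cons, ih (fun i hi => hsub i (Finset.mem_cons.2 (Or.inr hi)))
        (fun i hi j hj hij => hdisj i (Finset.mem_cons.2 (Or.inr hi))
          j (Finset.mem_cons.2 (Or.inr hj)) hij)]
      have hU : (⋃ i ∈ Finset.cons a t ha, f i) = f a ∪ ⋃ i ∈ t, f i := by
        simp [Set.iUnion_or, Set.iUnion_union_distrib]
      rw [hU, Set.ncard_union_eq]
      refine Set.disjoint_left.2 fun x hx hx' => ?_
      rcases Set.mem_iUnion₂.1 hx' with ⟨i, hi, hxi⟩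
      exact Set.disjoint_left.1
        (hdisj a (Finset.mem_cons_self a t) i (Finset.mem_cons.2 (Or.inr hi))
          (fun h => ha (h ▸ hi))) hx hxi
  rw [key]
  exact Set.ncard_le_ncard (Set.iUnion₂_subset hsub) (Set.toFinite s)

/-- A vertex of degree 2 with a known neighbor has exactly one other neighbor. -/
lemma second_neighbor {V : Type*} [Finite V] {G : SimpleGraph V} {v a : V}
    (hdeg : (G.neighborSet v).ncard = 2) (ha : G.Adj v a) :
    ∃ b, G.Adj v b ∧ b ≠ a ∧ G.neighborSet v = {a, b} := by
  obtain ⟨b, hb, hba⟩ := Set.exists_ne_of_one_lt_ncard (by omega : 1 < (G.neighborSet v).ncard) a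
  refine ⟨b, hb, hba, ?_⟩
  refine (Set.eq_of_subset_of_ncard_le ?_ ?_ (Set.toFinite _)).symm
  · rintro x (rfl | rfl)
    · exact ha
    · exact hb
  · rw [hdeg, Set.ncard_pair (Ne.symm hba)]

/-- Any triangle in a graph avoiding edges inside `U` contains a pure edge. -/
lemma triangle_pure {V : Type*} (U W : Set V) (hdisj : Disjoint U W)
    (hcover : U ∪ W = Set.univ) {G : SimpleGraph V}
    (hsub : ∀ x y, G.Adj x y → ¬ (x ∈ U ∧ y ∈ U)) {x y z : V}
    (hxy : G.Adj x y) (hyz : G.Adj y z) (hxz : G.Adj x z) :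
    ∃ p q, G.Adj p q ∧ p ∈ W ∧ q ∈ W ∧ p ∈ ({x, y, z} : Set V) ∧ q ∈ ({x, y, z} : Set V) := by
  have hW : ∀ v : V, v ∉ U → v ∈ W := fun v hv => by
    have := Set.mem_univ v
    rw [← hcover] at this
    exact this.resolve_left hv
  by_cases hx : x ∈ U
  · refine ⟨y, z, hyz, ?_, ?_, by simp, by simp⟩
    · exact hW y fun hy => hsub x y hxy ⟨hx, hy⟩
    · exact hW z fun hz => hsub x z hxz ⟨hx, hz⟩
  · by_cases hy : y ∈ U
    · exact ⟨x, z, hxz, hW x hx, hW z fun hz => hsub y z hyz ⟨hy, hz⟩, by simp, by simp⟩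
    · exact ⟨x, y, hxy, hW x hx, hW y hy, by simp, by simp⟩

lemma sym2_ne {α : Type*} {a b c d : α} (h1 : a ≠ c) (h2 : a ≠ d) : s(a,b) ≠ s(c,d) := by
  intro h
  have := Sym2.mem_iff.mp (h ▸ Sym2.mem_mk_left a b)
  tauto

lemma sym2_ne' {α : Type*} {a b c d : α} (h1 : b ≠ c) (h2 : b ≠ d) : s(a,b) ≠ s(c,d) := by
  intro h
  have := Sym2.mem_iff.mp (h ▸ Sym2.mem_mk_right a b)
  tauto

lemma lowA {V : Type*} [Finite V] (U W : Set V) (hdisj : Disjoint U W)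
    (hcover : U ∪ W = Set.univ) {G : SimpleGraph V}
    (hsub : ∀ x y, G.Adj x y → ¬ (x ∈ U ∧ y ∈ U)) (x₀ : V)
    (hx2 : ∀ v ∈ G.support, v ≠ x₀ → (G.neighborSet v).ncard = 2)
    {C : G.ConnectedComponent} (hC : C ∈ nontrivialComponents G)
    (hne : C ≠ G.connectedComponentMk x₀) :
    4 ≤ (compEdges G C).ncard + (compPure W G C).ncard := by
  obtain ⟨x, y, hxy, hx⟩ := hC
  -- every vertex of C has degree two
  have hdeg : ∀ v : V, G.connectedComponentMk v = C → v ∈ G.support →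
      (G.neighborSet v).ncard = 2 := by
    intro v hv hvs
    refine hx2 v hvs fun h => hne ?_
    rw [← hv, h]
  have hy : G.connectedComponentMk y = C :=
    (ConnectedComponent.connectedComponentMk_eq_of_adj hxy).symm.trans hx
  have hdx : (G.neighborSet x).ncard = 2 := hdeg x hx ⟨y, hxy⟩
  have hdy : (G.neighborSet y).ncard = 2 := hdeg y hy ⟨x, hxy.symm⟩
  obtain ⟨z, hxz, hzy, -⟩ := second_neighbor hdx hxy
  have hz : G.connectedComponentMk z = C :=
    (ConnectedComponent.connectedComponentMk_eq_of_adj hxz).symm.trans hx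
  have hzx : z ≠ x := hxz.ne'
  by_cases htri : G.Adj y z
  · -- triangle case : at least 3 edges and a pure edge
    have h3 : ({s(x,y), s(x,z), s(y,z)} : Set (Sym2 V)) ⊆ compEdges G C := by
      rintro e (rfl | rfl | rfl)
      · exact mem_compEdges hxy hx
      · exact mem_compEdges hxz hx
      · exact mem_compEdges htri hy
    have hcard : ({s(x,y), s(x,z), s(y,z)} : Set (Sym2 V)).ncard = 3 := by
      have h1 : s(x,y) ∉ ({s(x,z), s(y,z)} : Set (Sym2 V)) := by
        rintro (h | h)
        · exact sym2_ne' hxy.ne' hzy.symm h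
        · exact sym2_ne hxy.ne hzx.symm h
      have h2 : s(x,z) ∉ ({s(y,z)} : Set (Sym2 V)) := by
        rintro h
        rw [Set.mem_singleton_iff] at h
        exact sym2_ne hxy.ne hxz.ne h
      rw [Set.ncard_insert_of_notMem h1 (Set.toFinite _),
        Set.ncard_insert_of_notMem h2 (Set.toFinite _), Set.ncard_singleton]
    have hE : 3 ≤ (compEdges G C).ncard := by
      rw [← hcard]; exact Set.ncard_le_ncard h3 (Set.toFinite _)
    have hP : 1 ≤ (compPure W G C).ncard := by
      obtain ⟨p, q, hpq, hpW, hqW, hp, hq⟩ := triangle_pure U W hdisj hcover hsub hxy htri hxz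
      have hpC : G.connectedComponentMk p = C := by
        rcases hp with rfl | rfl | rfl
        · exact hx
        · exact hy
        · exact hz
      have : s(p,q) ∈ compPure W G C := by
        refine ⟨mem_compEdges hpq hpC, ?_⟩
        intro v hv
        rw [Sym2.mem_iff] at hv
        rcases hv with rfl | rfl
        · exact hpW
        · exact hqW
      have := Set.ncard_pos (Set.toFinite (compPure W G C)) |>.mpr ⟨_, this⟩
      omega
    omega
  · -- no triangle : four distinct edges
    obtain ⟨w, hyw, hwx, -⟩ := second_neighbor hdy hxy.symm
    have hw : G.connectedComponentMk w = C :=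
      (ConnectedComponent.connectedComponentMk_eq_of_adj hyw).symm.trans hy
    have hwy : w ≠ y := hyw.ne'
    have hwz : w ≠ z := fun h => htri (h ▸ hyw)
    obtain ⟨t, hzt, htx, -⟩ := second_neighbor (hdeg z hz ⟨x, hxz.symm⟩) hxz.symm
    have h4 : ({s(x,y), s(x,z), s(y,w), s(z,t)} : Set (Sym2 V)) ⊆ compEdges G C := by
      rintro e (rfl | rfl | rfl | rfl)
      · exact mem_compEdges hxy hx
      · exact mem_compEdges hxz hx
      · exact mem_compEdges hyw hy
      · exact mem_compEdges hzt hz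
    have hcard : ({s(x,y), s(x,z), s(y,w), s(z,t)} : Set (Sym2 V)).ncard = 4 := by
      have htz : t ≠ z := hzt.ne'
      have hne1 : s(x,y) ∉ ({s(x,z), s(y,w), s(z,t)} : Set (Sym2 V)) := by
        rintro (h | h | h)
        · exact sym2_ne' hxy.ne' hzy.symm h
        · exact sym2_ne hxy.ne hwx.symm h
        · exact sym2_ne hzx.symm htx.symm h
      have hne2 : s(x,z) ∉ ({s(y,w), s(z,t)} : Set (Sym2 V)) := by
        rintro (h | h)
        · exact sym2_ne hxy.ne hwx.symm h
        · exact sym2_ne hzx.symm htx.symm h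
      have hne3 : s(y,w) ∉ ({s(z,t)} : Set (Sym2 V)) := by
        rintro h
        rw [Set.mem_singleton_iff] at h
        exact (sym2_ne hzy hwz.symm h.symm).elim
      rw [Set.ncard_insert_of_notMem hne1 (Set.toFinite _),
        Set.ncard_insert_of_notMem hne2 (Set.toFinite _),
        Set.ncard_insert_of_notMem hne3 (Set.toFinite _), Set.ncard_singleton]
    have hE : 4 ≤ (compEdges G C).ncard := by
      rw [← hcard]; exact Set.ncard_le_ncard h4 (Set.toFinite _)
    omega

lemma lowB {V : Type*} [Fintype V] (U W : Set V) (hdisj : Disjoint U W)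
    (hcover : U ∪ W = Set.univ) {G : SimpleGraph V}
    (hsub : ∀ x y, G.Adj x y → ¬ (x ∈ U ∧ y ∈ U)) (x₀ : V)
    (hx4 : (G.neighborSet x₀).ncard = 4)
    (hx2 : ∀ v ∈ G.support, v ≠ x₀ → (G.neighborSet v).ncard = 2) :
    8 ≤ (compEdges G (G.connectedComponentMk x₀)).ncard +
      (compPure W G (G.connectedComponentMk x₀)).ncard := by
  classical
  letI : LinearOrder V := LinearOrder.lift' (Fintype.equivFin V) (Fintype.equivFin V).injective
  set C₀ := G.connectedComponentMk x₀ with hC₀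
  set N := G.neighborSet x₀ with hN
  -- each neighbor has degree two
  have hdeg2 : ∀ u ∈ N, (G.neighborSet u).ncard = 2 := fun u hu =>
    hx2 u ⟨x₀, (G.mem_neighborSet x₀ u |>.mp hu).symm⟩
      (fun h => G.irrefl (h ▸ (G.mem_neighborSet x₀ u |>.mp hu)))
  -- the second neighbor of each neighbor
  have hsec : ∀ u ∈ N, ∃ v, G.Adj u v ∧ v ≠ x₀ ∧ G.neighborSet u = {x₀, v} := by
    intro u hu
    exact second_neighbor (hdeg2 u hu) (G.mem_neighborSet x₀ u |>.mp hu).symm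
  set nb : V → V := fun u => if h : u ∈ N then (hsec u h).choose else u with hnb
  have hnbspec : ∀ u ∈ N, G.Adj u (nb u) ∧ nb u ≠ x₀ ∧ G.neighborSet u = {x₀, nb u} := by
    intro u hu
    simp only [hnb, dif_pos hu]
    exact (hsec u hu).choose_spec
  -- mutuality
  have hmut : ∀ u ∈ N, nb u ∈ N → nb (nb u) = u := by
    intro u hu hnu
    have h1 := hnbspec u hu
    have h2 := hnbspec (nb u) hnu
    have : u ∈ G.neighborSet (nb u) := h1.1.symm
    rw [h2.2.2] at this
    rcases this with h | h
    · exact absurd h (fun h' => G.irrefl (h' ▸ (G.mem_neighborSet x₀ u |>.mp hu)))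
    · exact h.symm
  have hune : ∀ u ∈ N, u ≠ x₀ := fun u hu h =>
    G.irrefl (h ▸ (G.mem_neighborSet x₀ u |>.mp hu))
  -- components
  have hcomp : ∀ u ∈ N, G.connectedComponentMk u = C₀ := fun u hu =>
    (ConnectedComponent.connectedComponentMk_eq_of_adj
      ((G.mem_neighborSet x₀ u |>.mp hu).symm)).trans rfl
  -- T : matched smaller vertices, T' : the rest
  set T : Set V := {u ∈ N | nb u ∈ N ∧ u < nb u} with hT
  set T' : Set V := N \ T with hT'
  -- star edges
  set S : Set (Sym2 V) := (fun u => s(x₀, u)) '' N with hS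
  have hScard : S.ncard = 4 := by
    rw [hS, Set.ncard_image_of_injOn, hx4]
    intro u hu v hv h
    rw [Sym2.eq_iff] at h
    rcases h with ⟨-, h⟩ | ⟨h1, h2⟩
    · exact h
    · exact absurd h1.symm (hune v hv)
  have hSsub : S ⊆ compEdges G C₀ := by
    rintro e ⟨u, hu, rfl⟩
    exact mem_compEdges (G.mem_neighborSet x₀ u |>.mp hu) rfl
  -- non-star extra edges from T'
  set E : V → Sym2 V := fun u => s(u, nb u) with hE
  have hEsub : ∀ u ∈ N, E u ∈ compEdges G C₀ ∧ E u ∉ S := by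
    intro u hu
    constructor
    · exact mem_compEdges (hnbspec u hu).1 (hcomp u hu)
    · rintro ⟨v, hv, hev⟩
      have : x₀ ∈ E u := hev ▸ Sym2.mem_mk_left x₀ v
      rw [hE] at this
      simp only [Sym2.mem_iff] at this
      rcases this with h | h
      · exact hune u hu h.symm
      · exact (hnbspec u hu).2.1 h.symm
  have hEinj : Set.InjOn E T' := by
    intro u hu v hv h
    rw [hE] at h
    simp only [Sym2.eq_iff] at h
    rcases h with ⟨h1, -⟩ | ⟨h1, h2⟩
    · exact h1
    · -- mutual pair : u = nb v, nb u = v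
      have hnuN : nb u ∈ N := by rw [h2]; exact hv.1
      have hnvN : nb v ∈ N := by rw [← h1]; exact hu.1
      have h3 : ¬ u < nb u := fun hlt => hu.2 ⟨hu.1, hnuN, hlt⟩
      have h4 : ¬ v < nb v := fun hlt => hv.2 ⟨hv.1, hnvN, hlt⟩
      have h5 : ¬ u < v := by rw [← h2]; exact h3
      have h6 : ¬ v < u := by rw [h1]; exact h4
      exact le_antisymm (not_lt.mp h6) (not_lt.mp h5)
  have hT'card : (E '' T').ncard = T'.ncard := Set.ncard_image_of_injOn hEinj
  -- lower bound on edges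
  have hFanchor : 4 + T'.ncard ≤ (compEdges G C₀).ncard := by
    have hsub2 : S ∪ E '' T' ⊆ compEdges G C₀ := by
      rintro e (he | ⟨u, hu, rfl⟩)
      · exact hSsub he
      · exact (hEsub u hu.1).1
    have hdisj2 : Disjoint S (E '' T') := by
      rw [Set.disjoint_right]
      rintro e ⟨u, hu, rfl⟩
      exact (hEsub u hu.1).2
    calc 4 + T'.ncard = (S ∪ E '' T').ncard := by
          rw [Set.ncard_union_eq hdisj2 (Set.toFinite _) (Set.toFinite _), hScard, hT'card]
      _ ≤ (compEdges G C₀).ncard := Set.ncard_le_ncard hsub2 (Set.toFinite _)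
  -- pure edges from T
  have hpt : ∀ u ∈ T, ∃ e, e ∈ compPure W G C₀ ∧
      ∃ p q, e = s(p,q) ∧ p ≠ q ∧ p ∈ ({x₀, u, nb u} : Set V) ∧ q ∈ ({x₀, u, nb u} : Set V) := by
    rintro u ⟨huN, hnuN, -⟩
    have h1 : G.Adj x₀ u := G.mem_neighborSet x₀ u |>.mp huN
    have h2 : G.Adj u (nb u) := (hnbspec u huN).1
    have h3 : G.Adj x₀ (nb u) := G.mem_neighborSet x₀ (nb u) |>.mp hnuN
    obtain ⟨p, q, hpq, hpW, hqW, hp, hq⟩ := triangle_pure U W hdisj hcover hsub h1 h2 h3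
    have hpC : G.connectedComponentMk p = C₀ := by
      have hp2 : p = x₀ ∨ p = u ∨ p = nb u := by
        simpa only [Set.mem_insert_iff, Set.mem_singleton_iff] using hp
      rcases hp2 with hp1 | hp1 | hp1 <;> rw [hp1]
      · exact hcomp u huN
      · exact hcomp (nb u) hnuN
    have hWmem : ∀ v ∈ s(p,q), v ∈ W := by
      intro v hv
      rw [Sym2.mem_iff] at hv
      rcases hv with rfl | rfl
      · exact hpW
      · exact hqW
    exact ⟨s(p,q), ⟨mem_compEdges hpq hpC, hWmem⟩, p, q, rfl, hpq.ne, hp, hq⟩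
  set g : V → Sym2 V := fun u => if h : u ∈ T then (hpt u h).choose else s(u, u) with hg
  have hgspec : ∀ u ∈ T, g u ∈ compPure W G C₀ ∧
      ∃ p q, g u = s(p,q) ∧ p ≠ q ∧ p ∈ ({x₀, u, nb u} : Set V) ∧ q ∈ ({x₀, u, nb u} : Set V) := by
    intro u hu
    simp only [hg, dif_pos hu]
    exact (hpt u hu).choose_spec
  have hginj : Set.InjOn g T := by
    intro u hu v hv h
    by_contra hne
    have huN := hu.1
    have hnuN := hu.2.1
    have hult := hu.2.2
    have hvN := hv.1
    have hnvN := hv.2.1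
    have hvlt := hv.2.2
    -- triples intersect only in x₀
    have hint : ∀ a : V, a ∈ ({x₀, u, nb u} : Set V) → a ∈ ({x₀, v, nb v} : Set V) → a = x₀ := by
      intro a ha hb
      simp only [Set.mem_insert_iff, Set.mem_singleton_iff] at ha hb
      rcases ha with ha | ha | ha
      · exact ha
      · rcases hb with hb | hb | hb
        · exact hb
        · exact absurd (ha.symm.trans hb) hne
        · exfalso
          have h8 : nb v = u := (ha.symm.trans hb).symm
          have h7 : nb u = v := by rw [← h8, hmut v hvN hnvN]
          rw [h7] at hult
          rw [h8] at hvlt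
          exact absurd (hult.trans hvlt) (lt_irrefl _)
      · rcases hb with hb | hb | hb
        · exact hb
        · exfalso
          have h7 : nb u = v := ha.symm.trans hb
          have h8 : nb v = u := by rw [← h7, hmut u huN hnuN]
          rw [h7] at hult
          rw [h8] at hvlt
          exact absurd (hult.trans hvlt) (lt_irrefl _)
        · exfalso
          have h7 : nb u = nb v := ha.symm.trans hb
          have h9 : nb (nb u) = u := hmut u huN hnuN
          rw [h7, hmut v hvN hnvN] at h9
          exact hne h9.symm
    obtain ⟨-, p, q, hpq, hpqne, hp, hq⟩ := hgspec u hu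
    obtain ⟨-, p', q', hpq', hpqne', hp', hq'⟩ := hgspec v hv
    have heq : s(p, q) = s(p', q') := by rw [← hpq, ← hpq', h]
    rw [Sym2.eq_iff] at heq
    have hpmem : p ∈ ({x₀, v, nb v} : Set V) := by
      rcases heq with ⟨rfl, rfl⟩ | ⟨rfl, rfl⟩
      · exact hp'
      · exact hq'
    have hqmem : q ∈ ({x₀, v, nb v} : Set V) := by
      rcases heq with ⟨rfl, rfl⟩ | ⟨rfl, rfl⟩
      · exact hq'
      · exact hp'
    exact hpqne ((hint p hp hpmem).trans (hint q hq hqmem).symm)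
  have hPanchor : T.ncard ≤ (compPure W G C₀).ncard := by
    rw [← Set.ncard_image_of_injOn hginj]
    exact Set.ncard_le_ncard (by rintro e ⟨u, hu, rfl⟩; exact (hgspec u hu).1) (Set.toFinite _)
  have hsplit : T.ncard + T'.ncard = 4 := by
    rw [hT', add_comm, Set.ncard_diff_add_ncard_of_subset (fun u hu => hu.1) (Set.toFinite _)]
    exact hx4
  omega


theorem stmt9 {V : Type*} [Fintype V] (U W : Set V)
    (hdisj : Disjoint U W) (hcover : U ∪ W = Set.univ)
    (hUodd : Odd U.ncard) (hWeven : Even W.ncard)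
    (G : SimpleGraph V)
    (hsub : ∀ x y, G.Adj x y → ¬ (x ∈ U ∧ y ∈ U))
    (μ : ℕ)
    (hpure : {e ∈ G.edgeSet | ∀ v ∈ e, v ∈ W}.ncard = μ)
    (hdeg : ∃ x₀, (G.neighborSet x₀).ncard = 4 ∧
      ∀ v ∈ G.support, v ≠ x₀ → (G.neighborSet v).ncard = 2) :
    (nontrivialComponents G).ncard ≤ (G.edgeSet.ncard + μ) / 4 - 1 := by
  classical
  obtain ⟨x₀, hx4, hx2⟩ := hdeg
  set C₀ := G.connectedComponentMk x₀ with hC₀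
  have hC₀mem : C₀ ∈ nontrivialComponents G := by
    have hne : (G.neighborSet x₀).Nonempty := by
      apply Set.nonempty_of_ncard_ne_zero
      rw [hx4]; omega
    obtain ⟨y, hy⟩ := hne
    exact ⟨x₀, y, hy, rfl⟩
  have hfin : (nontrivialComponents G).Finite := Set.toFinite _
  set t := hfin.toFinset with ht
  have hcard : (nontrivialComponents G).ncard = t.card := Set.ncard_eq_toFinset_card _ hfin
  have hC₀t : C₀ ∈ t := hfin.mem_toFinset.mpr hC₀mem
  -- upper bounds
  have hsum1 : ∑ C ∈ t, (compEdges G C).ncard ≤ G.edgeSet.ncard :=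
    sum_ncard_le t _ _ (fun C _ => Set.sep_subset _ _)
      (fun i _ j _ hij => compEdges_disjoint hij)
  have hsum2 : ∑ C ∈ t, (compPure W G C).ncard ≤ μ := by
    rw [← hpure]
    refine sum_ncard_le t _ _ (fun C _ => ?_) (fun i _ j _ hij => ?_)
    · rintro e ⟨⟨he, -⟩, hw⟩
      exact ⟨he, hw⟩
    · exact (compEdges_disjoint hij).mono (Set.sep_subset _ _) (Set.sep_subset _ _)
  -- lower bound
  have hlowA : ∀ C ∈ t.erase C₀,
      4 ≤ (compEdges G C).ncard + (compPure W G C).ncard := by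
    intro C hC
    exact lowA U W hdisj hcover hsub x₀ hx2
      (hfin.mem_toFinset.mp (Finset.mem_of_mem_erase hC)) (Finset.ne_of_mem_erase hC)
  have hlowB : 8 ≤ (compEdges G C₀).ncard + (compPure W G C₀).ncard :=
    lowB U W hdisj hcover hsub x₀ hx4 hx2
  have hlower : 4 * (t.card - 1) + 8 ≤
      ∑ C ∈ t, ((compEdges G C).ncard + (compPure W G C).ncard) := by
    rw [← Finset.sum_erase_add t _ hC₀t]
    have h1 : (t.erase C₀).card • 4 ≤
        ∑ C ∈ t.erase C₀, ((compEdges G C).ncard + (compPure W G C).ncard) :=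
      Finset.card_nsmul_le_sum _ _ _ hlowA
    rw [smul_eq_mul, Finset.card_erase_of_mem hC₀t, mul_comm] at h1
    omega
  have htotal : ∑ C ∈ t, ((compEdges G C).ncard + (compPure W G C).ncard) ≤
      G.edgeSet.ncard + μ := by
    rw [Finset.sum_add_distrib]
    omega
  have hc1 : 1 ≤ t.card := Finset.card_pos.mpr ⟨C₀, hC₀t⟩
  have hmain : 4 * (t.card + 1) ≤ G.edgeSet.ncard + μ := by omega
  have hdiv : t.card + 1 ≤ (G.edgeSet.ncard + μ) / 4 := by
    rw [Nat.le_div_iff_mul_le (by norm_num : 0 < 4)]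
    omega
  omega
end

section
/- Let G be a graph with maximum degree ℓ. If the subgraph of G induced by the vertices of degree ℓ contains no cycle, then G has a proper edge-colouring with ℓ colours such that the sizes of any two colour classes differ by at most one. -/
open SimpleGraph
open scoped Classical

section Aux

variable {V : Type*} [Fintype V]


def Miss (G : SimpleGraph V) (c : Sym2 V → ℕ) (v : V) (γ : ℕ) : Prop :=
  ∀ w, G.Adj v w → c s(v, w) ≠ γ

def ProperC (G : SimpleGraph V) (ℓ : ℕ) (c : Sym2 V → ℕ) : Prop :=
  (∀ e ∈ G.edgeSet, c e < ℓ) ∧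
  ∀ e₁ ∈ G.edgeSet, ∀ e₂ ∈ G.edgeSet, e₁ ≠ e₂ → (∃ v, v ∈ e₁ ∧ v ∈ e₂) → c e₁ ≠ c e₂

lemma properC_local {G : SimpleGraph V} {ℓ c} (h : ProperC G ℓ c) {v w₁ w₂ : V}
    (h₁ : G.Adj v w₁) (h₂ : G.Adj v w₂) (hne : w₁ ≠ w₂) : c s(v, w₁) ≠ c s(v, w₂) := by
  refine h.2 _ (G.mem_edgeSet.2 h₁) _ (G.mem_edgeSet.2 h₂) ?_ ⟨v, by simp, by simp⟩
  rw [Ne, Sym2.eq_iff, not_or]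
  constructor
  · rintro ⟨-, rfl⟩; exact hne rfl
  · rintro ⟨rfl, rfl⟩; exact G.irrefl h₂

lemma ncard_lt_of_no_missing {G : SimpleGraph V} {ℓ : ℕ} {c} {v : V}
    (h : ¬ ∃ γ < ℓ, Miss G c v γ) : ℓ ≤ (G.neighborSet v).ncard := by
  simp only [Miss] at h
  push_neg at h
  choose f hadj hcol using h
  set f' : ℕ → V := fun γ => if hγ : γ < ℓ then f γ hγ else v with hf'
  have := Finset.card_le_card_of_injOn f' (s := Finset.range ℓ)
    (t := (G.neighborSet v).toFinset) ?_ ?_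
  · simpa [Set.ncard_eq_toFinset_card'] using this
  · intro γ hγ
    rw [Finset.mem_coe, Finset.mem_range] at hγ
    simp only [hf', dif_pos hγ, Finset.mem_coe, Set.mem_toFinset]
    exact hadj γ hγ
  · intro γ₁ h₁ γ₂ h₂ hEq
    simp only [Finset.coe_range, Set.mem_Iio] at h₁ h₂
    simp only [hf', dif_pos h₁, dif_pos h₂] at hEq
    rw [← hcol γ₁ h₁, ← hcol γ₂ h₂, hEq]

lemma exists_missing {G : SimpleGraph V} {ℓ : ℕ} {c} {v : V}
    (hdeg : (G.neighborSet v).ncard < ℓ) : ∃ γ < ℓ, Miss G c v γ := by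
  by_contra h
  exact absurd (ncard_lt_of_no_missing h) (by omega)

/-- extend a colouring over a missing-at-both-ends edge -/
lemma properC_extend {G : SimpleGraph V} {ℓ : ℕ} {c} {a b : V} (hab : G.Adj a b)
    (hc : ProperC (G.deleteEdges {s(a,b)}) ℓ c) {γ : ℕ} (hγ : γ < ℓ)
    (ha : Miss (G.deleteEdges {s(a,b)}) c a γ) (hb : Miss (G.deleteEdges {s(a,b)}) c b γ) :
    ProperC G ℓ (fun e => if e = s(a,b) then γ else c e) := by
  have hmem : ∀ e ∈ G.edgeSet, e ≠ s(a,b) → e ∈ (G.deleteEdges {s(a,b)}).edgeSet := by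
    intro e he hne
    rw [edgeSet_deleteEdges]
    exact ⟨he, by simpa using hne⟩
  constructor
  · intro e he
    by_cases h : e = s(a,b)
    · simpa [h] using hγ
    · simpa [h] using hc.1 e (hmem e he h)
  · intro e₁ he₁ e₂ he₂ hne hshare
    have key : ∀ e ∈ G.edgeSet, e ≠ s(a,b) → (∃ v, v ∈ e ∧ v ∈ (s(a,b) : Sym2 V)) →
        c e ≠ γ := by
      intro e he hene ⟨v, hv1, hv2⟩
      induction e using Sym2.ind with
      | _ x1 x2 =>
        rw [Sym2.mem_iff] at hv1 hv2
        have hadj' : (G.deleteEdges {s(a,b)}).Adj x1 x2 :=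
          (SimpleGraph.mem_edgeSet _).1 (hmem _ he hene)
        rcases hv2 with rfl | rfl
        · -- v = a
          rcases hv1 with rfl | rfl
          · exact ha x2 hadj'
          · intro hcc; exact ha x1 hadj'.symm (by rwa [Sym2.eq_swap])
        · rcases hv1 with rfl | rfl
          · exact hb x2 hadj'
          · intro hcc; exact hb x1 hadj'.symm (by rwa [Sym2.eq_swap])
    by_cases h1 : e₁ = s(a,b) <;> by_cases h2 : e₂ = s(a,b)
    · exact absurd (h1.trans h2.symm) hne
    · simp only [if_pos h1, if_neg h2]
      obtain ⟨v, hv1, hv2⟩ := hshare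
      exact fun hcc => key e₂ he₂ h2 ⟨v, hv2, h1 ▸ hv1⟩ hcc.symm
    · simp only [if_neg h1, if_pos h2]
      obtain ⟨v, hv1, hv2⟩ := hshare
      exact key e₁ he₁ h1 ⟨v, hv1, h2 ▸ hv2⟩
    · simp only [if_neg h1, if_neg h2]
      exact hc.2 _ (hmem _ he₁ h1) _ (hmem _ he₂ h2) hne hshare

lemma properC_of_local {G : SimpleGraph V} {ℓ c} (h1 : ∀ e ∈ G.edgeSet, c e < ℓ)
    (h2 : ∀ v w₁ w₂, G.Adj v w₁ → G.Adj v w₂ → w₁ ≠ w₂ → c s(v,w₁) ≠ c s(v,w₂)) :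
    ProperC G ℓ c := by
  refine ⟨h1, ?_⟩
  intro e₁ he₁ e₂ he₂ hne ⟨v, hv₁, hv₂⟩
  induction e₁ using Sym2.ind with
  | _ x1 x2 =>
  induction e₂ using Sym2.ind with
  | _ y1 y2 =>
  rw [Sym2.mem_iff] at hv₁ hv₂
  rw [SimpleGraph.mem_edgeSet] at he₁ he₂
  have swap1 : ∀ (a b : V), s(a,b) = s(b,a) := fun a b => Sym2.eq_swap
  rcases hv₁ with rfl | rfl <;> rcases hv₂ with rfl | rfl
  · refine h2 v x2 y2 he₁ he₂ (fun h => hne (by rw [h]))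
  · rw [swap1 y1 v] at *
    exact h2 v x2 y1 he₁ he₂.symm (fun h => hne (by rw [h]))
  · rw [swap1 x1 v] at *
    exact h2 v x1 y2 he₁.symm he₂ (fun h => hne (by rw [h]))
  · rw [swap1 x1 v, swap1 y1 v] at *
    exact h2 v x1 y1 he₁.symm he₂.symm (fun h => hne (by rw [h]))

section Swap

variable {G₀ : SimpleGraph V} {ℓ : ℕ} {c : Sym2 V → ℕ} {α β : ℕ}

/-- the two-colour subgraph -/
def kG (G₀ : SimpleGraph V) (c : Sym2 V → ℕ) (α β : ℕ) : SimpleGraph V where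
  Adj a b := G₀.Adj a b ∧ (c s(a,b) = α ∨ c s(a,b) = β)
  symm := by
    constructor
    intro a b ⟨h1, h2⟩
    refine ⟨h1.symm, ?_⟩
    rwa [Sym2.eq_swap]
  loopless := ⟨fun a h => G₀.irrefl h.1⟩

lemma kG_le : kG G₀ c α β ≤ G₀ := fun a b h => h.1

lemma kG_mk_eq_of_adj {a b : V} (h : (kG G₀ c α β).Adj a b) :
    (kG G₀ c α β).connectedComponentMk a = (kG G₀ c α β).connectedComponentMk b :=
  ConnectedComponent.eq.2 h.reachable

/-- swap colours α, β on the component K of the two-colour subgraph -/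
noncomputable def kSwap (G₀ : SimpleGraph V) (c : Sym2 V → ℕ) (α β : ℕ)
    (K : (kG G₀ c α β).ConnectedComponent) : Sym2 V → ℕ :=
  fun e => if (∃ a b, e = s(a,b) ∧ (kG G₀ c α β).Adj a b ∧
      (kG G₀ c α β).connectedComponentMk a = K) then (if c e = α then β else α) else c e

variable {K : (kG G₀ c α β).ConnectedComponent}

lemma kSwap_eq_flip {v w : V} (h : (kG G₀ c α β).Adj v w)
    (hK : (kG G₀ c α β).connectedComponentMk v = K) :
    kSwap G₀ c α β K s(v,w) = if c s(v,w) = α then β else α :=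
  if_pos ⟨v, w, rfl, h, hK⟩

lemma kSwap_eq_self {v w : V}
    (h : ¬ ((kG G₀ c α β).Adj v w ∧ (kG G₀ c α β).connectedComponentMk v = K)) :
    kSwap G₀ c α β K s(v,w) = c s(v,w) := by
  refine if_neg ?_
  rintro ⟨a, b, heq, hadj, hk⟩
  rw [Sym2.eq_iff] at heq
  rcases heq with ⟨h1, h2⟩ | ⟨h1, h2⟩ <;> subst h1 <;> subst h2
  · exact h ⟨hadj, hk⟩
  · exact h ⟨hadj.symm, (kG_mk_eq_of_adj hadj.symm) ▸ hk⟩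

lemma kSwap_lt (hα : α < ℓ) (hβ : β < ℓ) (hc : ProperC G₀ ℓ c) :
    ∀ e ∈ G₀.edgeSet, kSwap G₀ c α β K e < ℓ := by
  intro e he
  unfold kSwap
  split
  · split <;> assumption
  · exact hc.1 e he

lemma kSwap_proper (hα : α < ℓ) (hβ : β < ℓ) (hαβ : α ≠ β) (hc : ProperC G₀ ℓ c) :
    ProperC G₀ ℓ (kSwap G₀ c α β K) := by
  refine properC_of_local (kSwap_lt hα hβ hc) ?_
  intro v w₁ w₂ h₁ h₂ hne
  have hcc := properC_local hc h₁ h₂ hne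
  by_cases F₁ : (kG G₀ c α β).Adj v w₁ ∧ (kG G₀ c α β).connectedComponentMk v = K <;>
    by_cases F₂ : (kG G₀ c α β).Adj v w₂ ∧ (kG G₀ c α β).connectedComponentMk v = K
  · rw [kSwap_eq_flip F₁.1 F₁.2, kSwap_eq_flip F₂.1 F₂.2]
    rcases F₁.1.2 with hc1 | hc1 <;> rcases F₂.1.2 with hc2 | hc2 <;>
      simp [hc1, hc2, hαβ, Ne.symm hαβ] <;> exact hcc (hc1.trans hc2.symm)
  · rw [kSwap_eq_flip F₁.1 F₁.2, kSwap_eq_self F₂]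
    have hc2 : ¬ (c s(v,w₂) = α ∨ c s(v,w₂) = β) := by
      intro hor
      exact F₂ ⟨⟨h₂, hor⟩, F₁.2⟩
    push_neg at hc2
    split <;> [exact fun h => hc2.2 h.symm; exact fun h => hc2.1 h.symm]
  · rw [kSwap_eq_self F₁, kSwap_eq_flip F₂.1 F₂.2]
    have hc1 : ¬ (c s(v,w₁) = α ∨ c s(v,w₁) = β) := by
      intro hor
      exact F₁ ⟨⟨h₁, hor⟩, F₂.2⟩
    push_neg at hc1
    split <;> [exact hc1.2; exact hc1.1]
  · rw [kSwap_eq_self F₁, kSwap_eq_self F₂]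
    exact hcc

lemma kSwap_notin {v : V} (hv : (kG G₀ c α β).connectedComponentMk v ≠ K) :
    ∀ w, G₀.Adj v w → kSwap G₀ c α β K s(v,w) = c s(v,w) :=
  fun _ _ => kSwap_eq_self (fun h => hv h.2)

lemma kSwap_miss_notin {v : V} (hv : (kG G₀ c α β).connectedComponentMk v ≠ K) {γ : ℕ} :
    Miss G₀ (kSwap G₀ c α β K) v γ ↔ Miss G₀ c v γ := by
  unfold Miss
  constructor <;> intro h w hw <;> have := h w hw
  · rwa [kSwap_notin hv w hw] at this
  · rwa [kSwap_notin hv w hw]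

lemma kSwap_miss_in (hαβ : α ≠ β) {v : V}
    (hv : (kG G₀ c α β).connectedComponentMk v = K) :
    Miss G₀ (kSwap G₀ c α β K) v α ↔ Miss G₀ c v β := by
  constructor
  · intro h w hw hcol
    have hadj : (kG G₀ c α β).Adj v w := ⟨hw, Or.inr hcol⟩
    have := h w hw
    rw [kSwap_eq_flip hadj hv, hcol, if_neg (Ne.symm hαβ)] at this
    exact this rfl
  · intro h w hw hcol
    by_cases hadj : (kG G₀ c α β).Adj v w ∧ (kG G₀ c α β).connectedComponentMk v = K
    · rw [kSwap_eq_flip hadj.1 hadj.2] at hcol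
      rcases hadj.1.2 with h1 | h1
      · rw [if_pos h1] at hcol; exact hαβ hcol.symm
      · rw [h1, if_neg (Ne.symm hαβ)] at hcol
        exact h w hw h1
    · rw [kSwap_eq_self hadj] at hcol
      exact hadj ⟨⟨hw, Or.inl hcol⟩, hv⟩

lemma kSwap_miss_other (hαβ : α ≠ β) {v : V} {γ : ℕ} (hγα : γ ≠ α) (hγβ : γ ≠ β) :
    Miss G₀ (kSwap G₀ c α β K) v γ ↔ Miss G₀ c v γ := by
  have key : ∀ w, G₀.Adj v w → (kSwap G₀ c α β K s(v,w) = γ ↔ c s(v,w) = γ) := by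
    intro w hw
    by_cases hadj : (kG G₀ c α β).Adj v w ∧ (kG G₀ c α β).connectedComponentMk v = K
    · rw [kSwap_eq_flip hadj.1 hadj.2]
      rcases hadj.1.2 with h1 | h1 <;>
        simp [h1, Ne.symm hγα, Ne.symm hγβ, hαβ, Ne.symm hαβ]
    · rw [kSwap_eq_self hadj]
  unfold Miss
  constructor <;> intro h w hw <;> have := h w hw
  · exact fun hx => this ((key w hw).2 hx)
  · exact fun hx => this ((key w hw).1 hx)

end Swap

section Counting

variable {H : SimpleGraph V}

lemma mk_eq_of_adj {a b : V} (h : H.Adj a b) :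
    H.connectedComponentMk a = H.connectedComponentMk b :=
  ConnectedComponent.eq.2 h.reachable

noncomputable def suppF (H : SimpleGraph V) [Fintype V] (K : H.ConnectedComponent) : Finset V :=
  Finset.univ.filter (fun v => H.connectedComponentMk v = K)

noncomputable def insideF (H : SimpleGraph V) [Fintype V] (K : H.ConnectedComponent) :
    Finset (Sym2 V) :=
  H.edgeFinset.filter (fun e => ∀ v ∈ e, H.connectedComponentMk v = K)

lemma mem_suppF {K : H.ConnectedComponent} {v : V} :
    v ∈ suppF H K ↔ H.connectedComponentMk v = K := by simp [suppF]

lemma mem_insideF {K : H.ConnectedComponent} {a b : V} (hab : H.Adj a b) :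
    s(a,b) ∈ insideF H K ↔ H.connectedComponentMk a = K := by
  simp only [insideF, Finset.mem_filter, mem_edgeFinset, SimpleGraph.mem_edgeSet]
  constructor
  · rintro ⟨-, h⟩
    exact h a (by simp)
  · intro h
    refine ⟨hab, ?_⟩
    intro v hv
    rw [Sym2.mem_iff] at hv
    rcases hv with rfl | rfl
    · exact h
    · exact (mk_eq_of_adj hab).symm.trans h

lemma cc_lb (K : H.ConnectedComponent) : (suppF H K).card ≤ (insideF H K).card + 1 := by
  obtain ⟨x₀, rfl⟩ := Quot.exists_rep K
  have hx₀K : H.connectedComponentMk x₀ = Quot.mk _ x₀ := rfl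
  have hstep : ∀ v ∈ (suppF H (Quot.mk _ x₀)).erase x₀,
      ∃ w, H.Adj v w ∧ H.dist w x₀ < H.dist v x₀ := by
    intro v hv
    rw [Finset.mem_erase] at hv
    obtain ⟨hne, hmk⟩ := hv
    have hreach : H.Reachable v x₀ := ConnectedComponent.eq.1 ((mem_suppF.1 hmk).trans hx₀K.symm)
    obtain ⟨p, hp⟩ := hreach.exists_walk_length_eq_dist
    cases p with
    | nil => exact absurd rfl hne
    | cons h q =>
      refine ⟨_, h, ?_⟩
      have := dist_le q
      simp only [Walk.length_cons] at hp
      omega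
  set g : V → V := fun v => if h : ∃ w, H.Adj v w ∧ H.dist w x₀ < H.dist v x₀
    then Classical.choose h else v with hg
  have hgspec : ∀ v ∈ (suppF H (Quot.mk _ x₀)).erase x₀,
      H.Adj v (g v) ∧ H.dist (g v) x₀ < H.dist v x₀ := by
    intro v hv
    have h := hstep v hv
    simp only [hg, dif_pos h]
    exact Classical.choose_spec h
  have hcard := Finset.card_le_card_of_injOn (fun v => s(v, g v)) ?_ ?_
    (s := (suppF H (Quot.mk _ x₀)).erase x₀) (t := insideF H (Quot.mk _ x₀))
  · have hx : x₀ ∈ suppF H (Quot.mk _ x₀) := mem_suppF.2 rfl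
    rw [Finset.card_erase_of_mem hx] at hcard
    omega
  · intro v hv
    obtain ⟨hadj, -⟩ := hgspec v hv
    exact (mem_insideF hadj).2 (mem_suppF.1 (Finset.mem_erase.1 hv).2)
  · intro v₁ h₁ v₂ h₂ hEq
    by_contra hne
    simp only [Sym2.eq_iff] at hEq
    rcases hEq with ⟨e1, e2⟩ | ⟨e1, e2⟩
    · exact hne e1
    · rw [Finset.mem_coe] at h₁ h₂
      have d1 := (hgspec v₁ h₁).2
      have d2 := (hgspec v₂ h₂).2
      rw [e2] at d1
      rw [← e1] at d2
      omega

lemma cc_doublecount {K : H.ConnectedComponent} {A : Finset (Sym2 V)}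
    (hA : A ⊆ insideF H K) :
    ∑ v ∈ suppF H K, (A.filter (fun e => v ∈ e)).card = 2 * A.card := by
  have lhs : ∀ v, (A.filter (fun e => v ∈ e)).card = ∑ e ∈ A, (if v ∈ e then 1 else 0) := by
    intro v; rw [Finset.card_filter]
  calc ∑ v ∈ suppF H K, (A.filter (fun e => v ∈ e)).card
      = ∑ v ∈ suppF H K, ∑ e ∈ A, (if v ∈ e then 1 else 0) := by
        exact Finset.sum_congr rfl (fun v _ => lhs v)
    _ = ∑ e ∈ A, ∑ v ∈ suppF H K, (if v ∈ e then 1 else 0) := Finset.sum_comm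
    _ = ∑ e ∈ A, 2 := by
        refine Finset.sum_congr rfl (fun e he => ?_)
        have heI := hA he
        simp only [insideF, Finset.mem_filter, mem_edgeFinset] at heI
        obtain ⟨heE, hall⟩ := heI
        induction e using Sym2.ind with
        | _ a b =>
          have hab : a ≠ b := by
            intro h
            exact H.not_isDiag_of_mem_edgeSet heE (by simp [h])
          rw [← Finset.card_filter]
          have : (suppF H K).filter (fun v => v ∈ s(a,b)) = {a, b} := by
            ext v
            simp only [Finset.mem_filter, mem_suppF, Sym2.mem_iff, Finset.mem_insert,
              Finset.mem_singleton]
            constructor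
            · rintro ⟨-, h⟩; exact h
            · rintro (rfl | rfl)
              · exact ⟨hall v (by simp), Or.inl rfl⟩
              · exact ⟨hall v (by simp), Or.inr rfl⟩
          rw [this, Finset.card_insert_of_notMem (by simpa using hab), Finset.card_singleton]
    _ = 2 * A.card := by rw [Finset.sum_const, smul_eq_mul, mul_comm]

end Counting

section Counting2

variable {H : SimpleGraph V}

lemma ncard_neighborSet_eq_degree (H : SimpleGraph V) (v : V) :
    (H.neighborSet v).ncard = H.degree v := by
  rw [SimpleGraph.degree, neighborFinset_def, Set.ncard_eq_toFinset_card']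

lemma inside_filter_le_degree (K : H.ConnectedComponent) (v : V) :
    ((insideF H K).filter (fun e => v ∈ e)).card ≤ H.degree v := by
  rw [← card_incidenceFinset_eq_degree]
  refine Finset.card_le_card ?_
  intro e he
  simp only [Finset.mem_filter, insideF, mem_edgeFinset] at he
  rw [mem_incidenceFinset]
  exact ⟨he.1.1, he.2⟩

/-- three vertices of degree ≤ 1 cannot lie in one component of a max-degree-2 graph -/
lemma three_low_degree_impossible (hd2 : ∀ v, H.degree v ≤ 2) {x z₁ z₂ : V}
    (h1 : H.degree x ≤ 1) (h2 : H.degree z₁ ≤ 1) (h3 : H.degree z₂ ≤ 1)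
    (ne1 : x ≠ z₁) (ne2 : x ≠ z₂) (ne3 : z₁ ≠ z₂)
    (hr1 : H.Reachable z₁ x) (hr2 : H.Reachable z₂ x) : False := by
  set K := H.connectedComponentMk x with hK
  have hxK : x ∈ suppF H K := mem_suppF.2 rfl
  have hz1K : z₁ ∈ suppF H K := mem_suppF.2 (ConnectedComponent.eq.2 hr1)
  have hz2K : z₂ ∈ suppF H K := mem_suppF.2 (ConnectedComponent.eq.2 hr2)
  set T : Finset V := {x, z₁, z₂} with hT
  have hTsub : T ⊆ suppF H K := by
    intro v hv
    simp only [hT, Finset.mem_insert, Finset.mem_singleton] at hv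
    rcases hv with rfl | rfl | rfl <;> assumption
  have hTcard : T.card = 3 := by
    rw [hT]
    rw [Finset.card_insert_of_notMem (by simp [ne1, ne2]),
      Finset.card_insert_of_notMem (by simp [ne3]), Finset.card_singleton]
  have hdc := cc_doublecount (A := insideF H K) (K := K) (subset_refl _)
  have hsum : ∑ v ∈ suppF H K, ((insideF H K).filter (fun e => v ∈ e)).card ≤
      2 * (suppF H K).card - 3 := by
    rw [← Finset.sum_sdiff hTsub]
    have b1 : ∑ v ∈ suppF H K \ T, ((insideF H K).filter (fun e => v ∈ e)).card ≤
        ∑ v ∈ suppF H K \ T, 2 :=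
      Finset.sum_le_sum (fun v _ => (inside_filter_le_degree K v).trans (hd2 v))
    have b2 : ∑ v ∈ T, ((insideF H K).filter (fun e => v ∈ e)).card ≤ ∑ v ∈ T, 1 := by
      refine Finset.sum_le_sum (fun v hv => ?_)
      simp only [hT, Finset.mem_insert, Finset.mem_singleton] at hv
      rcases hv with rfl | rfl | rfl <;> exact (inside_filter_le_degree K v).trans ‹_›
    have hcards : (suppF H K \ T).card = (suppF H K).card - 3 := by
      rw [Finset.card_sdiff_of_subset hTsub, hTcard]
    have h3n : 3 ≤ (suppF H K).card := hTcard ▸ Finset.card_le_card hTsub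
    simp only [Finset.sum_const, smul_eq_mul] at b1 b2
    omega
  have hlb := cc_lb K
  have h3n' : 3 ≤ (suppF H K).card := hTcard ▸ Finset.card_le_card hTsub
  rw [hdc] at hsum
  omega

/-- colour-class balance within a component -/
lemma cc_excess (K : H.ConnectedComponent) (P Q : Sym2 V → Prop)
    [DecidablePred P] [DecidablePred Q]
    (hPQ : ∀ e ∈ insideF H K, P e ∨ Q e) (hnPQ : ∀ e, ¬ (P e ∧ Q e))
    (hP1 : ∀ v, (((insideF H K).filter P).filter (fun e => v ∈ e)).card ≤ 1)
    (hQ1 : ∀ v, (((insideF H K).filter Q).filter (fun e => v ∈ e)).card ≤ 1) :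
    ((insideF H K).filter P).card ≤ ((insideF H K).filter Q).card + 1 := by
  classical
  have hsplit : ((insideF H K).filter P).card + ((insideF H K).filter Q).card =
      (insideF H K).card := by
    have hQP : (insideF H K).filter Q = (insideF H K).filter (fun e => ¬ P e) := by
      ext e
      simp only [Finset.mem_filter]
      constructor
      · rintro ⟨he, hq⟩
        exact ⟨he, fun hp => hnPQ e ⟨hp, hq⟩⟩
      · rintro ⟨he, hnp⟩
        refine ⟨he, ?_⟩
        rcases hPQ e he with h | h
        · exact absurd h hnp
        · exact h
    rw [hQP, Finset.card_filter_add_card_filter_not (p := P)]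
  have hdcP := cc_doublecount (A := (insideF H K).filter P) (K := K)
    (Finset.filter_subset _ _)
  have hP : 2 * ((insideF H K).filter P).card ≤ (suppF H K).card := by
    rw [← hdcP]
    calc ∑ v ∈ suppF H K, (((insideF H K).filter P).filter (fun e => v ∈ e)).card
        ≤ ∑ v ∈ suppF H K, 1 := Finset.sum_le_sum (fun v _ => hP1 v)
      _ = (suppF H K).card := by simp
  have hlb := cc_lb K
  omega

end Counting2

section Fan

variable {G : SimpleGraph V} {ℓ : ℕ} {x y : V} {c : Sym2 V → ℕ} {z : ℕ → V} {n : ℕ}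

def IsFan (G : SimpleGraph V) (x y : V) (c : Sym2 V → ℕ) (z : ℕ → V) (n : ℕ) : Prop :=
  z 0 = y ∧ Set.InjOn z (Set.Iic n) ∧ (∀ i, i ≤ n → G.Adj x (z i)) ∧
  ∀ i, i < n → (G.deleteEdges {s(x,y)}).Adj x (z (i+1)) ∧
    Miss (G.deleteEdges {s(x,y)}) c (z i) (c s(x, z (i+1)))

noncomputable def fanShift (x : V) (c : Sym2 V → ℕ) (z : ℕ → V) (n : ℕ) : Sym2 V → ℕ :=
  fun e => if h : ∃ i, i < n ∧ e = s(x, z i) then c s(x, z (Nat.find h + 1)) else c e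

lemma IsFan.ne_x (hfan : IsFan G x y c z n) : ∀ i ≤ n, z i ≠ x :=
  fun i hi => (hfan.2.2.1 i hi).ne'

lemma IsFan.ne_y (hfan : IsFan G x y c z n) : ∀ i, 0 < i → i ≤ n → z i ≠ y := by
  intro i h0 hn heq
  obtain ⟨k, rfl⟩ : ∃ k, i = k + 1 := ⟨i - 1, by omega⟩
  have := (hfan.2.2.2 k (by omega)).1
  rw [deleteEdges_adj] at this
  exact this.2 (by rw [heq]; rfl)

lemma IsFan.edge_mem (hfan : IsFan G x y c z n) {i : ℕ} (h0 : 0 < i) (hn : i ≤ n) :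
    (G.deleteEdges {s(x,y)}).Adj x (z i) := by
  obtain ⟨k, rfl⟩ : ∃ k, i = k + 1 := ⟨i - 1, by omega⟩
  exact (hfan.2.2.2 k (by omega)).1

lemma fanShift_eq (hfan : IsFan G x y c z n) {i : ℕ} (hi : i < n) :
    fanShift x c z n s(x, z i) = c s(x, z (i+1)) := by
  have h : ∃ j, j < n ∧ (s(x, z i) : Sym2 V) = s(x, z j) := ⟨i, hi, rfl⟩
  rw [fanShift, dif_pos h]
  obtain ⟨hj, heq⟩ := Nat.find_spec h
  have hz : z i = z (Nat.find h) := Sym2.congr_right.1 heq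
  have : Nat.find h = i :=
    hfan.2.1 (Set.mem_Iic.2 (le_of_lt hj)) (Set.mem_Iic.2 (le_of_lt hi)) hz.symm
  rw [this]

lemma fanShift_ne {e : Sym2 V} (h : ∀ i, i < n → e ≠ s(x, z i)) :
    fanShift x c z n e = c e := by
  rw [fanShift, dif_neg]
  rintro ⟨i, hi, heq⟩
  exact h i hi heq

lemma nonfan_mem (hfan : IsFan G x y c z n) {e : Sym2 V}
    (he : e ∈ (G.deleteEdges {s(x, z n)}).edgeSet)
    (hnf : ∀ i, i < n → e ≠ s(x, z i)) : e ∈ (G.deleteEdges {s(x,y)}).edgeSet := by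
  rw [edgeSet_deleteEdges] at he ⊢
  refine ⟨he.1, ?_⟩
  simp only [Set.mem_singleton_iff] at *
  rcases Nat.eq_zero_or_pos n with rfl | hn
  · rw [← hfan.1]; exact he.2
  · rw [← hfan.1]; exact hnf 0 hn

lemma fanShift_proper (hc : ProperC (G.deleteEdges {s(x,y)}) ℓ c)
    (hfan : IsFan G x y c z n) :
    ProperC (G.deleteEdges {s(x, z n)}) ℓ (fanShift x c z n) := by
  set G₀ := G.deleteEdges {s(x,y)} with hG₀
  set G₁ := G.deleteEdges {s(x, z n)} with hG₁
  refine properC_of_local ?_ ?_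
  · intro e he
    by_cases hf : ∃ i, i < n ∧ e = s(x, z i)
    · obtain ⟨i, hi, rfl⟩ := hf
      rw [fanShift_eq hfan hi]
      exact hc.1 _ ((G₀.mem_edgeSet).2 (hfan.2.2.2 i hi).1)
    · push_neg at hf
      rw [fanShift_ne hf]
      exact hc.1 _ (nonfan_mem hfan he hf)
  · have main : ∀ (v w₁ w₂ : V), G₁.Adj v w₁ → G₁.Adj v w₂ → w₁ ≠ w₂ →
        (∃ i, i < n ∧ s(v,w₁) = s(x, z i)) → (¬ ∃ i, i < n ∧ s(v,w₂) = s(x, z i)) →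
        fanShift x c z n s(v,w₁) ≠ fanShift x c z n s(v,w₂) := by
      intro v w₁ w₂ h₁ h₂ hne F₁ F₂
      obtain ⟨i, hi, heq₁⟩ := F₁
      push_neg at F₂
      rw [heq₁, fanShift_eq hfan hi, fanShift_ne F₂]
      have hvmem : v = x ∨ v = z i := by
        have : v ∈ (s(x, z i) : Sym2 V) := heq₁ ▸ (Sym2.mem_mk_left v w₁)
        rwa [Sym2.mem_iff] at this
      have he₂₀ : s(v, w₂) ∈ G₀.edgeSet :=
        nonfan_mem hfan ((G₁.mem_edgeSet).2 h₂) F₂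
      rcases hvmem with hv | hv
      · -- v = x
        have hip : G₀.Adj x (z (i+1)) := (hfan.2.2.2 i hi).1
        rw [hv] at he₂₀ h₂ F₂
        have hne' : (s(x, z (i+1)) : Sym2 V) ≠ s(x, w₂) := by
          intro heq
          have hw₂ : w₂ = z (i+1) := (Sym2.congr_right.1 heq).symm
          rcases Nat.lt_or_ge (i+1) n with hlt | hge
          · exact F₂ (i+1) hlt (by rw [hw₂])
          · have hin : i + 1 = n := by omega
            have := (deleteEdges_adj.1 h₂).2
            rw [hw₂, hin] at this
            exact this rfl
        rw [hv]
        exact fun hcc =>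
          hc.2 _ (G₀.mem_edgeSet.2 hip) _ he₂₀ hne' ⟨x, by simp, by simp⟩ hcc
      · -- v = z i
        have hMiss := (hfan.2.2.2 i hi).2
        rw [hv] at he₂₀
        rw [hv]
        exact fun hcc => hMiss w₂ (G₀.mem_edgeSet.1 he₂₀) hcc.symm
    intro v w₁ w₂ h₁ h₂ hne
    by_cases F₁ : ∃ i, i < n ∧ s(v,w₁) = s(x, z i) <;>
      by_cases F₂ : ∃ i, i < n ∧ s(v,w₂) = s(x, z i)
    · obtain ⟨i, hi, heq₁⟩ := F₁
      obtain ⟨j, hj, heq₂⟩ := F₂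
      have hij : i ≠ j := by
        intro h
        rw [h] at heq₁
        exact hne (Sym2.congr_right.1 (heq₁.trans heq₂.symm))
      rw [heq₁, heq₂, fanShift_eq hfan hi, fanShift_eq hfan hj]
      refine hc.2 _ (G₀.mem_edgeSet.2 (hfan.2.2.2 i hi).1) _
        (G₀.mem_edgeSet.2 (hfan.2.2.2 j hj).1) ?_ ⟨x, by simp, by simp⟩
      intro heq
      have := hfan.2.1 (Set.mem_Iic.2 (by omega)) (Set.mem_Iic.2 (by omega))
        (Sym2.congr_right.1 heq)
      omega
    · exact main v w₁ w₂ h₁ h₂ hne F₁ F₂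
    · exact (main v w₂ w₁ h₂ h₁ hne.symm F₂ F₁).symm
    · push_neg at F₁ F₂
      rw [fanShift_ne F₁, fanShift_ne F₂]
      have he₁ := nonfan_mem hfan ((G₁.mem_edgeSet).2 h₁) F₁
      have he₂ := nonfan_mem hfan ((G₁.mem_edgeSet).2 h₂) F₂
      refine hc.2 _ he₁ _ he₂ ?_ ⟨v, by simp, by simp⟩
      intro heq
      exact hne (Sym2.congr_right.1 heq)

lemma fanShift_miss_x (hfan : IsFan G x y c z n) (γ : ℕ) :
    Miss (G.deleteEdges {s(x, z n)}) (fanShift x c z n) x γ ↔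
      Miss (G.deleteEdges {s(x,y)}) c x γ := by
  set G₀ := G.deleteEdges {s(x,y)} with hG₀
  set G₁ := G.deleteEdges {s(x, z n)} with hG₁
  constructor
  · intro h w hw hcol
    by_cases hk : ∃ k, 1 ≤ k ∧ k ≤ n ∧ w = z k
    · obtain ⟨k, hk1, hkn, rfl⟩ := hk
      have hk1n : k - 1 < n := by omega
      have hadj1 : G₁.Adj x (z (k-1)) := by
        rw [hG₁, deleteEdges_adj]
        refine ⟨hfan.2.2.1 _ (by omega), ?_⟩
        simp only [Set.mem_singleton_iff]
        intro heq
        have : z (k-1) = z n := Sym2.congr_right.1 heq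
        have := hfan.2.1 (Set.mem_Iic.2 (by omega)) (Set.mem_Iic.2 le_rfl) this
        omega
      have := h _ hadj1
      rw [fanShift_eq hfan hk1n] at this
      have hk' : k - 1 + 1 = k := by omega
      rw [hk'] at this
      exact this hcol
    · push_neg at hk
      have hwy : w ≠ y := by
        intro heq
        exact (deleteEdges_adj.1 hw).2 (by rw [heq]; rfl)
      have hwzn : w ≠ z n := by
        intro heq
        rcases Nat.eq_zero_or_pos n with h0 | h0
        · rw [h0] at heq; rw [hfan.1] at heq; exact hwy heq
        · exact (hk n h0 le_rfl) heq
      have hadj1 : G₁.Adj x w := by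
        rw [hG₁, deleteEdges_adj]
        refine ⟨(deleteEdges_adj.1 hw).1, ?_⟩
        simp only [Set.mem_singleton_iff]
        intro heq
        exact hwzn (Sym2.congr_right.1 heq)
      have := h _ hadj1
      rw [fanShift_ne ?_] at this
      · exact this hcol
      · intro i hi heq
        have hwz : w = z i := Sym2.congr_right.1 heq
        rcases Nat.eq_zero_or_pos i with h0 | h0
        · rw [h0, hfan.1] at hwz; exact hwy hwz
        · exact hk i h0 (le_of_lt hi) hwz
  · intro h w hw hcol
    by_cases hf : ∃ i, i < n ∧ (s(x,w) : Sym2 V) = s(x, z i)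
    · obtain ⟨i, hi, heq⟩ := hf
      rw [heq, fanShift_eq hfan hi] at hcol
      exact h _ (hfan.2.2.2 i hi).1 hcol
    · push_neg at hf
      rw [fanShift_ne hf] at hcol
      have : s(x,w) ∈ G₀.edgeSet := nonfan_mem hfan (G₁.mem_edgeSet.2 hw) hf
      exact h w (G₀.mem_edgeSet.1 this) hcol

lemma fanShift_miss_last (hfan : IsFan G x y c z n) (γ : ℕ)
    (h : Miss (G.deleteEdges {s(x,y)}) c (z n) γ) :
    Miss (G.deleteEdges {s(x, z n)}) (fanShift x c z n) (z n) γ := by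
  intro w hw hcol
  have hwx : w ≠ x := by
    intro heq
    refine (deleteEdges_adj.1 hw).2 ?_
    rw [heq, Sym2.eq_swap]
    rfl
  have hznx : z n ≠ x := hfan.ne_x n le_rfl
  have hnf : ∀ i, i < n → (s(z n, w) : Sym2 V) ≠ s(x, z i) := by
    intro i hi heq
    have : x ∈ (s(z n, w) : Sym2 V) := by rw [heq]; simp
    rw [Sym2.mem_iff] at this
    rcases this with h1 | h1
    · exact hznx h1.symm
    · exact hwx h1.symm
  rw [fanShift_ne hnf] at hcol
  have hmem : s(z n, w) ∈ (G.deleteEdges {s(x,y)}).edgeSet := by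
    rw [edgeSet_deleteEdges]
    refine ⟨G.mem_edgeSet.2 (deleteEdges_adj.1 hw).1, ?_⟩
    · simp only [Set.mem_singleton_iff]
      intro heq
      have : x ∈ (s(z n, w) : Sym2 V) := by rw [heq]; simp
      rw [Sym2.mem_iff] at this
      rcases this with h1 | h1
      · exact hznx h1.symm
      · exact hwx h1.symm
  exact h w ((G.deleteEdges {s(x,y)}).mem_edgeSet.1 hmem) hcol

/-- extension contradiction: a fan whose tip and x share a missing colour
    yields a proper colouring of all of G -/
lemma fan_ext_contra (hG : ¬ ∃ cc, ProperC G ℓ cc)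
    (hc : ProperC (G.deleteEdges {s(x,y)}) ℓ c) (hfan : IsFan G x y c z n)
    {γ : ℕ} (hγ : γ < ℓ) (hmx : Miss (G.deleteEdges {s(x,y)}) c x γ)
    (hmz : Miss (G.deleteEdges {s(x,y)}) c (z n) γ) : False := by
  refine hG ⟨_, properC_extend (hfan.2.2.1 n le_rfl) (fanShift_proper hc hfan) hγ
    ((fanShift_miss_x hfan γ).2 hmx) (fanShift_miss_last hfan γ hmz)⟩

end Fan

section Key

variable {G₀ : SimpleGraph V} {ℓ : ℕ} {c : Sym2 V → ℕ} {α β : ℕ}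

lemma kG_comm : kG G₀ c α β = kG G₀ c β α := by
  ext a b
  simp only [kG]
  tauto

lemma kG_nbr_le_two (hc : ProperC G₀ ℓ c) (v : V) : (kG G₀ c α β).degree v ≤ 2 := by
  rw [← ncard_neighborSet_eq_degree]
  have hinj : Set.InjOn (fun w => c s(v,w)) ((kG G₀ c α β).neighborSet v) := by
    intro w₁ h₁ w₂ h₂ heq
    by_contra hne
    exact properC_local hc h₁.1 h₂.1 hne heq
  calc ((kG G₀ c α β).neighborSet v).ncard
      = ((fun w => c s(v,w)) '' ((kG G₀ c α β).neighborSet v)).ncard :=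
        (Set.ncard_image_of_injOn hinj).symm
    _ ≤ ({α, β} : Set ℕ).ncard := by
        refine Set.ncard_le_ncard ?_ (Set.toFinite _)
        rintro γ ⟨w, hw, rfl⟩
        simpa using hw.2
    _ ≤ 2 := by
        refine (Set.ncard_insert_le _ _).trans ?_
        simp

lemma kG_nbr_le_one (hc : ProperC G₀ ℓ c) {v : V} (hmiss : Miss G₀ c v α) :
    (kG G₀ c α β).degree v ≤ 1 := by
  rw [← ncard_neighborSet_eq_degree]
  have hinj : Set.InjOn (fun w => c s(v,w)) ((kG G₀ c α β).neighborSet v) := by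
    intro w₁ h₁ w₂ h₂ heq
    by_contra hne
    exact properC_local hc h₁.1 h₂.1 hne heq
  calc ((kG G₀ c α β).neighborSet v).ncard
      = ((fun w => c s(v,w)) '' ((kG G₀ c α β).neighborSet v)).ncard :=
        (Set.ncard_image_of_injOn hinj).symm
    _ ≤ ({β} : Set ℕ).ncard := by
        refine Set.ncard_le_ncard ?_ (Set.toFinite _)
        rintro γ ⟨w, hw, rfl⟩
        rcases hw.2 with h | h
        · exact absurd h (hmiss w hw.1)
        · simpa using h
    _ ≤ 1 := by simp

end Key

section KeyLemma

lemma keyLemma {G : SimpleGraph V} {ℓ : ℕ} (hmax : ∀ v, (G.neighborSet v).ncard ≤ ℓ)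
    (hG : ¬ ∃ cc, ProperC G ℓ cc) {x y : V} (hxy : G.Adj x y)
    {c : Sym2 V → ℕ} (hc : ProperC (G.deleteEdges {s(x,y)}) ℓ c) :
    ∃ z, G.Adj x z ∧ (G.neighborSet z).ncard = ℓ ∧ z ≠ y := by
  set G₀ := G.deleteEdges {s(x,y)} with hG₀
  have hsubnbr : ∀ v, G₀.neighborSet v ⊆ G.neighborSet v := by
    intro v w h
    exact (deleteEdges_adj.1 h).1
  have hnx : (G₀.neighborSet x).ncard < ℓ := by
    have hss : G₀.neighborSet x ⊂ G.neighborSet x := by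
      refine ⟨hsubnbr x, fun hsub => ?_⟩
      have := hsub hxy
      exact (deleteEdges_adj.1 this).2 rfl
    exact lt_of_lt_of_le (Set.ncard_lt_ncard hss (Set.toFinite _)) (hmax x)
  obtain ⟨α, hα, hmissxα⟩ := exists_missing hnx
  by_contra hcon
  push_neg at hcon
  -- maximal fan
  set P : ℕ → Prop := fun n => ∃ z, IsFan G x y c z n with hP
  have hP0 : P 0 := by
    refine ⟨fun _ => y, rfl, fun a ha b hb _ => ?_, fun i _ => hxy, fun i hi => absurd hi (by omega)⟩
    simp only [Set.mem_Iic, Nat.le_zero] at ha hb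
    omega
  have hPbound : ∀ m, P m → m ≤ Fintype.card V := by
    intro m ⟨z, hz⟩
    have := Finset.card_le_card_of_injOn (s := Finset.Iic m) (t := (Finset.univ : Finset V)) z
      (fun a _ => Finset.mem_univ _) ?_
    · rw [Nat.card_Iic, Finset.card_univ] at this
      omega
    · intro a ha b hb hab
      exact hz.2.1 (by simpa using ha) (by simpa using hb) hab
  set N := Nat.findGreatest P (Fintype.card V) with hN
  have hPN : P N := Nat.findGreatest_spec (Nat.zero_le _) hP0
  obtain ⟨z, hfan⟩ := hPN
  have hmaxN : ∀ m, P m → m ≤ N := fun m hm => Nat.le_findGreatest (hPbound m hm) hm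
  have A : ∀ (c' : Sym2 V → ℕ), ProperC G₀ ℓ c' → ∀ (z' : ℕ → V) (n' : ℕ),
      IsFan G x y c' z' n' → ∀ γ, γ < ℓ → Miss G₀ c' x γ → Miss G₀ c' (z' n') γ → False :=
    fun c' hc' z' n' hf γ hγ h1 h2 => fan_ext_contra hG hc' hf hγ h1 h2
  -- Step B : some colour missing at the tip
  have hBzn : ∃ β < ℓ, Miss G₀ c (z N) β := by
    by_contra hno
    have hge := ncard_lt_of_no_missing (G := G₀) (c := c) (v := z N) (ℓ := ℓ) (by exact hno)
    have heq : (G.neighborSet (z N)).ncard = ℓ :=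
      le_antisymm (hmax _) (hge.trans (Set.ncard_le_ncard (hsubnbr _) (Set.toFinite _)))
    have hzy : z N = y := hcon (z N) (hfan.2.2.1 N le_rfl) heq
    have hss : G₀.neighborSet y ⊂ G.neighborSet y := by
      refine ⟨hsubnbr y, fun hsub => ?_⟩
      have := hsub hxy.symm
      refine (deleteEdges_adj.1 this).2 ?_
      rw [Sym2.eq_swap]
      rfl
    have hlt := lt_of_lt_of_le (Set.ncard_lt_ncard hss (Set.toFinite _)) (hmax y)
    rw [hzy] at hge
    omega
  obtain ⟨β, hβ, hmissznβ⟩ := hBzn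
  have hαβ : α ≠ β := fun h => A c hc z N hfan α hα hmissxα (h ▸ hmissznβ)
  have hused : ¬ Miss G₀ c x β := fun h => A c hc z N hfan β hβ h hmissznβ
  simp only [Miss] at hused
  push_neg at hused
  obtain ⟨w, hw, hcolw⟩ := hused
  have hwy : w ≠ y := by
    intro heq
    exact (deleteEdges_adj.1 hw).2 (by rw [heq]; rfl)
  -- Step E : w is in the fan
  have hwzj : ∃ j, 1 ≤ j ∧ j ≤ N ∧ w = z j := by
    by_contra hno
    push_neg at hno
    have hwz : ∀ b, b ≤ N → w ≠ z b := by
      intro b hb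
      rcases Nat.eq_zero_or_pos b with rfl | hpos
      · rw [hfan.1]; exact hwy
      · exact hno b hpos hb
    set z' : ℕ → V := fun i => if i = N + 1 then w else z i with hz'
    have hPN1 : P (N+1) := by
      refine ⟨z', ?_, ?_, ?_, ?_⟩
      · simp only [hz', if_neg (by omega : (0:ℕ) ≠ N+1)]
        exact hfan.1
      · intro a ha b hb hab
        simp only [Set.mem_Iic] at ha hb
        simp only [hz'] at hab
        by_cases haN : a = N + 1 <;> by_cases hbN : b = N + 1
        · omega
        · rw [if_pos haN, if_neg hbN] at hab
          exact absurd hab (hwz b (by omega))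
        · rw [if_neg haN, if_pos hbN] at hab
          exact absurd hab.symm (hwz a (by omega))
        · rw [if_neg haN, if_neg hbN] at hab
          exact hfan.2.1 (Set.mem_Iic.2 (by omega)) (Set.mem_Iic.2 (by omega)) hab
      · intro i hi
        simp only [hz']
        by_cases hiN : i = N + 1
        · rw [if_pos hiN]
          exact (deleteEdges_adj.1 hw).1
        · rw [if_neg hiN]
          exact hfan.2.2.1 i (by omega)
      · intro i hi
        simp only [hz']
        by_cases hiN : i + 1 = N + 1
        · have hiN' : i = N := by omega
          rw [if_pos hiN, if_neg (by omega : i ≠ N + 1), hiN']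
          exact ⟨hw, by rw [hcolw]; exact hmissznβ⟩
        · rw [if_neg hiN, if_neg (by omega : i ≠ N + 1)]
          exact hfan.2.2.2 i (by omega)
    have := hmaxN _ hPN1
    omega
  obtain ⟨j, hj1, hjN, hwj⟩ := hwzj
  rw [hwj] at hw hcolw
  have hjltN : j < N := by
    rcases eq_or_lt_of_le hjN with rfl | h
    · exfalso
      refine hmissznβ x hw.symm ?_
      rw [Sym2.eq_swap]
      exact hcolw
    · exact h
  have hmissuβ : Miss G₀ c (z (j-1)) β := by
    have h := (hfan.2.2.2 (j-1) (by omega)).2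
    have hj' : j - 1 + 1 = j := by omega
    rw [hj'] at h
    rwa [hcolw] at h
  set H := kG G₀ c α β with hH
  have hd2 : ∀ v, H.degree v ≤ 2 := kG_nbr_le_two hc
  have hdx : H.degree x ≤ 1 := kG_nbr_le_one hc hmissxα
  have hdu : H.degree (z (j-1)) ≤ 1 := by
    rw [hH, kG_comm]
    exact kG_nbr_le_one hc hmissuβ
  have hdzN : H.degree (z N) ≤ 1 := by
    rw [hH, kG_comm]
    exact kG_nbr_le_one hc hmissznβ
  have hxu : x ≠ z (j-1) := (hfan.ne_x (j-1) (by omega)).symm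
  have hxzN : x ≠ z N := (hfan.ne_x N le_rfl).symm
  have huzN : z (j-1) ≠ z N := by
    intro h
    have := hfan.2.1 (Set.mem_Iic.2 (by omega)) (Set.mem_Iic.2 le_rfl) h
    omega
  have hnotboth : ¬ (H.Reachable (z (j-1)) x ∧ H.Reachable (z N) x) := by
    rintro ⟨r1, r2⟩
    exact three_low_degree_impossible hd2 hdx hdu hdzN hxu hxzN huzN r1 r2
  have hedgecol : ∀ K, H.connectedComponentMk x ≠ K → ∀ i, 1 ≤ i → i ≤ N →
      kSwap G₀ c α β K s(x, z i) = c s(x, z i) := by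
    intro K hK i h1 h2
    exact kSwap_notin hK _ (hfan.edge_mem h1 h2)
  by_cases hru : H.Reachable (z (j-1)) x
  · -- Case II : swap the component of z N
    have hrzN : ¬ H.Reachable (z N) x := fun r => hnotboth ⟨hru, r⟩
    set K := H.connectedComponentMk (z N) with hK
    have hxK : H.connectedComponentMk x ≠ K := by
      intro h
      exact hrzN ((ConnectedComponent.eq.1 (h.trans hK)).symm)
    have huK : H.connectedComponentMk (z (j-1)) ≠ K := by
      intro h
      exact hrzN ((ConnectedComponent.eq.1 (h.trans hK)).symm.trans hru)
    set c₁ := kSwap G₀ c α β K with hc₁def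
    have hc₁ : ProperC G₀ ℓ c₁ := kSwap_proper hα hβ hαβ hc
    have hm1 : Miss G₀ c₁ x α := by
      rw [hc₁def]
      intro w' hw' hcc
      rw [kSwap_notin hxK w' hw'] at hcc
      exact hmissxα w' hw' hcc
    have hm2 : Miss G₀ c₁ (z N) α := (kSwap_miss_in hαβ rfl).2 hmissznβ
    have hfan₁ : IsFan G x y c₁ z N := by
      refine ⟨hfan.1, hfan.2.1, hfan.2.2.1, ?_⟩
      intro i hi
      refine ⟨(hfan.2.2.2 i hi).1, ?_⟩
      rw [hc₁def, hedgecol K hxK (i+1) (by omega) (by omega)]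
      have hold := (hfan.2.2.2 i hi).2
      by_cases hij : i + 1 = j
      · have hzi : i = j - 1 := by omega
        have hγi : c s(x, z (i+1)) = β := by rw [hij]; exact hcolw
        rw [hγi, hzi]
        rw [← hc₁def]
        intro w' hw' hcc
        rw [hc₁def, kSwap_notin huK w' hw'] at hcc
        exact hmissuβ w' hw' hcc
      · have hγiβ : c s(x, z (i+1)) ≠ β := by
          intro h
          refine properC_local hc (hfan.2.2.2 i hi).1 hw ?_ (h.trans hcolw.symm)
          intro heq
          have := hfan.2.1 (Set.mem_Iic.2 (by omega)) (Set.mem_Iic.2 (by omega)) heq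
          omega
        have hγiα : c s(x, z (i+1)) ≠ α :=
          fun h => hmissxα (z (i+1)) (hfan.2.2.2 i hi).1 h
        rw [← hc₁def]
        exact (kSwap_miss_other hαβ hγiα hγiβ).2 hold
    exact A c₁ hc₁ z N hfan₁ α hα hm1 hm2
  · -- Case I : swap the component of u = z (j-1)
    set K := H.connectedComponentMk (z (j-1)) with hK
    have hxK : H.connectedComponentMk x ≠ K := by
      intro h
      exact hru ((ConnectedComponent.eq.1 (h.trans hK)).symm)
    set c₁ := kSwap G₀ c α β K with hc₁def
    have hc₁ : ProperC G₀ ℓ c₁ := kSwap_proper hα hβ hαβ hc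
    have hm1 : Miss G₀ c₁ x α := by
      rw [hc₁def]
      intro w' hw' hcc
      rw [kSwap_notin hxK w' hw'] at hcc
      exact hmissxα w' hw' hcc
    have hm2 : Miss G₀ c₁ (z (j-1)) α := (kSwap_miss_in hαβ rfl).2 hmissuβ
    have hfan₁ : IsFan G x y c₁ z (j-1) := by
      refine ⟨hfan.1, hfan.2.1.mono (Set.Iic_subset_Iic.2 (by omega)),
        fun i hi => hfan.2.2.1 i (by omega), ?_⟩
      intro i hi
      refine ⟨(hfan.2.2.2 i (by omega)).1, ?_⟩
      rw [hc₁def, hedgecol K hxK (i+1) (by omega) (by omega)]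
      have hold := (hfan.2.2.2 i (by omega)).2
      have hγiβ : c s(x, z (i+1)) ≠ β := by
        intro h
        refine properC_local hc (hfan.2.2.2 i (by omega)).1 hw ?_ (h.trans hcolw.symm)
        intro heq
        have := hfan.2.1 (Set.mem_Iic.2 (by omega)) (Set.mem_Iic.2 (by omega)) heq
        omega
      have hγiα : c s(x, z (i+1)) ≠ α := by
        intro h
        exact hmissxα (z (i+1)) (hfan.2.2.2 i (by omega)).1 h
      rw [← hc₁def]
      exact (kSwap_miss_other hαβ hγiα hγiβ).2 hold
    exact A c₁ hc₁ z (j-1) hfan₁ α hα hm1 hm2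

end KeyLemma

section Acyclic

lemma acyclic_no_min_degree_two {W : Type*} [Fintype W] (D : SimpleGraph W)
    (hac : D.IsAcyclic) (w₀ : W)
    (hdeg : ∀ w, ∃ a b, D.Adj w a ∧ D.Adj w b ∧ a ≠ b) : False := by
  classical
  set F : Finset W := Finset.univ.filter (fun w => D.Reachable w w₀) with hF
  have hw₀F : w₀ ∈ F := by
    simp only [hF, Finset.mem_filter, Finset.mem_univ, true_and]
    exact Reachable.refl w₀
  obtain ⟨v, hvF, hvmax⟩ := F.exists_max_image (fun w => D.dist w w₀) ⟨w₀, hw₀F⟩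
  have hvreach : D.Reachable v w₀ := by simpa [hF] using hvF
  obtain ⟨a, b, hadjA, hadjB, hab⟩ := hdeg v
  have haF : a ∈ F := by
    simp only [hF, Finset.mem_filter, Finset.mem_univ, true_and]
    exact (hadjA.symm.reachable).trans hvreach
  have hbF : b ∈ F := by
    simp only [hF, Finset.mem_filter, Finset.mem_univ, true_and]
    exact (hadjB.symm.reachable).trans hvreach
  -- shortest paths
  have short : ∀ u, u ∈ F → D.Adj v u →
      ∃ q : D.Walk u w₀, q.IsPath ∧ q.length = D.dist u w₀ ∧ v ∉ q.support := by
    intro u huF hadj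
    have hureach : D.Reachable u w₀ := by simpa [hF] using huF
    obtain ⟨p, hp⟩ := hureach.exists_walk_length_eq_dist
    refine ⟨p.bypass, SimpleGraph.Walk.bypass_isPath p, ?_, ?_⟩
    · exact le_antisymm (hp ▸ SimpleGraph.Walk.length_bypass_le p) (dist_le _)
    · intro hmem
      have hlen : p.bypass.length = D.dist u w₀ :=
        le_antisymm (hp ▸ SimpleGraph.Walk.length_bypass_le p) (dist_le _)
      have hsum : (p.bypass.takeUntil v hmem).length + (p.bypass.dropUntil v hmem).length
          = p.bypass.length := by
        conv_rhs => rw [← SimpleGraph.Walk.take_spec p.bypass hmem]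
        rw [SimpleGraph.Walk.length_append]
      have h1 : D.dist v w₀ ≤ (p.bypass.dropUntil v hmem).length := dist_le _
      have h2 : (p.bypass.takeUntil v hmem).length ≠ 0 := by
        intro h0
        exact hadj.ne' (SimpleGraph.Walk.eq_of_length_eq_zero h0)
      have h3 : D.dist u w₀ ≤ D.dist v w₀ := hvmax u huF
      omega
  obtain ⟨qa, hqaP, hqaL, hqaS⟩ := short a haF hadjA
  obtain ⟨qb, hqbP, hqbL, hqbS⟩ := short b hbF hadjB
  have hPa : (SimpleGraph.Walk.cons hadjA qa).IsPath := hqaP.cons hqaS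
  have hPb : (SimpleGraph.Walk.cons hadjB qb).IsPath := hqbP.cons hqbS
  have := hac.path_unique ⟨_, hPa⟩ ⟨_, hPb⟩
  have hw : (SimpleGraph.Walk.cons hadjA qa) = (SimpleGraph.Walk.cons hadjB qb) := by
    exact congrArg Subtype.val this
  have hsupp := congrArg SimpleGraph.Walk.support hw
  rw [SimpleGraph.Walk.support_cons, SimpleGraph.Walk.support_cons,
    SimpleGraph.Walk.support_eq_cons qa, SimpleGraph.Walk.support_eq_cons qb] at hsupp
  simp only [List.cons.injEq] at hsupp
  exact hab hsupp.2.1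

end Acyclic

section Part1

theorem fournier_colorable (ℓ : ℕ) :
    ∀ (G : SimpleGraph V), (∀ v, (G.neighborSet v).ncard ≤ ℓ) →
      (G.induce {v | (G.neighborSet v).ncard = ℓ}).IsAcyclic → ∃ c, ProperC G ℓ c := by
  have main : ∀ (n : ℕ) (G : SimpleGraph V), G.edgeSet.ncard = n →
      (∀ v, (G.neighborSet v).ncard ≤ ℓ) →
      (G.induce {v | (G.neighborSet v).ncard = ℓ}).IsAcyclic → ∃ c, ProperC G ℓ c := by
    intro n
    induction n using Nat.strong_induction_on with
    | _ n IH =>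
      intro G hn hmax hac
      by_cases hempty : G.edgeSet = ∅
      · exact ⟨fun _ => 0, fun e he => by simp [hempty] at he,
          fun e he => by simp [hempty] at he⟩
      · obtain ⟨e₀, he₀⟩ := Set.nonempty_iff_ne_empty.2 hempty
        by_contra hG
        -- criticality
        have hcrit : ∀ x y : V, G.Adj x y →
            ∃ c, ProperC (G.deleteEdges {s(x,y)}) ℓ c := by
          intro x y hxy
          set G' := G.deleteEdges {s(x,y)} with hG'
          have hnbrsub : ∀ v, G'.neighborSet v ⊆ G.neighborSet v :=
            fun v w h => (deleteEdges_adj.1 h).1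
          have hmax' : ∀ v, (G'.neighborSet v).ncard ≤ ℓ :=
            fun v => (Set.ncard_le_ncard (hnbrsub v) (Set.toFinite _)).trans (hmax v)
          have hmono : G'.edgeSet.ncard < n := by
            rw [← hn]
            refine Set.ncard_lt_ncard ?_ (Set.toFinite _)
            rw [hG', edgeSet_deleteEdges]
            constructor
            · exact Set.diff_subset
            · intro hsub
              have := hsub (G.mem_edgeSet.2 hxy)
              exact this.2 rfl
          have hSsub : {v | (G'.neighborSet v).ncard = ℓ} ⊆
              {v | (G.neighborSet v).ncard = ℓ} := by
            intro v hv
            simp only [Set.mem_setOf_eq] at hv ⊢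
            exact le_antisymm (hmax v)
              (hv ▸ Set.ncard_le_ncard (hnbrsub v) (Set.toFinite _))
          have hac' : (G'.induce {v | (G'.neighborSet v).ncard = ℓ}).IsAcyclic := by
            intro u p hp
            set φ : (G'.induce {v | (G'.neighborSet v).ncard = ℓ}) →g
                (G.induce {v | (G.neighborSet v).ncard = ℓ}) :=
              ⟨fun w => ⟨w.1, hSsub w.2⟩, by
                intro a b hadj
                rw [comap_adj] at hadj ⊢
                exact (deleteEdges_adj.1 hadj).1⟩ with hφ
            have hinj : Function.Injective φ := by
              rintro ⟨a, ha⟩ ⟨b, hb⟩ h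
              have : a = b := congrArg (fun (q : {v | (G.neighborSet v).ncard = ℓ}) => q.1) h
              exact Subtype.ext this
            exact hac (p.map φ)
              ((SimpleGraph.Walk.map_isCycle_iff_of_injective hinj).2 hp)
          exact IH _ hmono G' rfl hmax' hac'
        -- an edge of G
        have hedge : ∃ x y : V, G.Adj x y := by
          induction e₀ using Sym2.ind with
          | _ a b => exact ⟨a, b, G.mem_edgeSet.1 he₀⟩
        obtain ⟨x₀, y₀, hxy₀⟩ := hedge
        have hℓpos : 1 ≤ ℓ := by
          have h1 : 0 < (G.neighborSet x₀).ncard :=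
            (Set.ncard_pos (Set.toFinite _)).2 ⟨y₀, hxy₀⟩
          have := hmax x₀
          omega
        have key : ∀ x y : V, G.Adj x y →
            ∃ z, G.Adj x z ∧ (G.neighborSet z).ncard = ℓ ∧ z ≠ y := by
          intro x y hxy
          obtain ⟨c, hc⟩ := hcrit x y hxy
          exact keyLemma hmax hG hxy hc
        obtain ⟨z₀, -, hz₀, -⟩ := key x₀ y₀ hxy₀
        -- min degree ≥ 2 in the induced graph on max-degree vertices
        set S := {v | (G.neighborSet v).ncard = ℓ} with hS
        have hdeg : ∀ w : S, ∃ a b : S, (G.induce S).Adj w a ∧ (G.induce S).Adj w b ∧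
            a ≠ b := by
          rintro ⟨s, hs⟩
          have hnon : (G.neighborSet s).Nonempty := by
            apply Set.nonempty_of_ncard_ne_zero
            simp only [hS, Set.mem_setOf_eq] at hs
            omega
          obtain ⟨y, hy⟩ := hnon
          obtain ⟨z₁, hz₁adj, hz₁S, -⟩ := key s y hy
          obtain ⟨z₂, hz₂adj, hz₂S, hz₂ne⟩ := key s z₁ hz₁adj
          refine ⟨⟨z₁, hz₁S⟩, ⟨z₂, hz₂S⟩, ?_, ?_, ?_⟩
          · rw [comap_adj]; exact hz₁adj
          · rw [comap_adj]; exact hz₂adj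
          · intro h
            exact hz₂ne (congrArg Subtype.val h).symm
        exact acyclic_no_min_degree_two (G.induce S) hac ⟨z₀, hz₀⟩ hdeg
  exact fun G => main (G.edgeSet.ncard) G rfl

end Part1

section Balance

variable {G : SimpleGraph V} {ℓ : ℕ}

noncomputable def cnt (G : SimpleGraph V) [Fintype V] (c : Sym2 V → ℕ) (γ : ℕ) : ℕ :=
  (G.edgeFinset.filter (fun e => c e = γ)).card

lemma edge_mk_eq {H : SimpleGraph V} {e : Sym2 V} (he : e ∈ H.edgeSet) :
    ∀ u ∈ e, ∀ w ∈ e, H.connectedComponentMk u = H.connectedComponentMk w := by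
  induction e using Sym2.ind with
  | _ a b =>
    intro u hu w hw
    rw [Sym2.mem_iff] at hu hw
    have hadj : H.Adj a b := H.mem_edgeSet.1 he
    rcases hu with rfl | rfl <;> rcases hw with rfl | rfl
    · rfl
    · exact mk_eq_of_adj hadj
    · exact (mk_eq_of_adj hadj).symm
    · rfl

lemma mem_kG_edgeSet {c : Sym2 V → ℕ} {α β : ℕ} {e : Sym2 V} :
    e ∈ (kG G c α β).edgeSet ↔ e ∈ G.edgeSet ∧ (c e = α ∨ c e = β) := by
  induction e using Sym2.ind with
  | _ a b => rfl

theorem balanced_exists (hℓ : ∃ c, ProperC G ℓ c) :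
    ∃ c, ProperC G ℓ c ∧ ∀ i, i < ℓ → ∀ j, j < ℓ → cnt G c i ≤ cnt G c j + 1 := by
  classical
  set Φ : (Sym2 V → ℕ) → ℕ := fun c => ∑ γ ∈ Finset.range ℓ, (cnt G c γ)^2 with hΦdef
  set PP : ℕ → Prop := fun m => ∃ c, ProperC G ℓ c ∧ Φ c = m with hPPdef
  have hPPex : ∃ m, PP m := by
    obtain ⟨c, hc⟩ := hℓ
    exact ⟨Φ c, c, hc, rfl⟩
  obtain ⟨c, hc, hΦc⟩ := Nat.find_spec hPPex
  refine ⟨c, hc, ?_⟩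
  by_contra hbal
  push_neg at hbal
  obtain ⟨α, hα, β, hβ, hgt⟩ := hbal
  have hαβ : α ≠ β := by intro h; rw [h] at hgt; omega
  set H := kG G c α β with hH
  have hmemH : ∀ e : Sym2 V, e ∈ H.edgeSet ↔ e ∈ G.edgeSet ∧ (c e = α ∨ c e = β) :=
    fun e => mem_kG_edgeSet
  have hHsub : H.edgeFinset ⊆ G.edgeFinset := by
    intro e he
    rw [mem_edgeFinset] at he ⊢
    exact (mem_kG_edgeSet.1 he).1
  have hinsub : ∀ K, insideF H K ⊆ G.edgeFinset :=
    fun K => (Finset.filter_subset _ _).trans hHsub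
  -- count decomposition over components
  have hdecomp : ∀ γ, (γ = α ∨ γ = β) →
      cnt G c γ = ∑ K : H.ConnectedComponent,
        ((insideF H K).filter (fun e => c e = γ)).card := by
    intro γ hγ
    have hfil : G.edgeFinset.filter (fun e => c e = γ) =
        H.edgeFinset.filter (fun e => c e = γ) := by
      ext e
      simp only [Finset.mem_filter, mem_edgeFinset, hmemH]
      constructor
      · rintro ⟨he, hc'⟩
        refine ⟨⟨he, ?_⟩, hc'⟩
        rcases hγ with rfl | rfl
        · exact Or.inl hc'
        · exact Or.inr hc'
      · rintro ⟨⟨he, -⟩, hc'⟩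
        exact ⟨he, hc'⟩
    rw [cnt, hfil]
    rw [Finset.card_eq_sum_card_fiberwise
      (f := fun e => H.connectedComponentMk (Quot.out e).1) (t := Finset.univ)
      (fun e _ => Finset.mem_univ _)]
    refine Finset.sum_congr rfl (fun K _ => ?_)
    congr 1
    ext e
    simp only [Finset.mem_filter, mem_edgeFinset, insideF]
    constructor
    · rintro ⟨⟨he, hcol⟩, hK⟩
      refine ⟨⟨he, fun v hv => ?_⟩, hcol⟩
      have hout : (Quot.out e).1 ∈ e := Sym2.out_fst_mem e
      exact (edge_mk_eq he v hv _ hout).trans hK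
    · rintro ⟨⟨he, hall⟩, hcol⟩
      exact ⟨⟨he, hcol⟩, hall _ (Sym2.out_fst_mem e)⟩
  -- some component with more α than β
  have hsums : ∑ K : H.ConnectedComponent,
      ((insideF H K).filter (fun e => c e = β)).card <
      ∑ K : H.ConnectedComponent,
      ((insideF H K).filter (fun e => c e = α)).card := by
    rw [← hdecomp α (Or.inl rfl), ← hdecomp β (Or.inr rfl)]
    omega
  obtain ⟨K, -, hKlt⟩ := Finset.exists_lt_of_sum_lt hsums
  -- excess exactly one
  have hone : ∀ v, ∀ γ, (((insideF H K).filter (fun e => c e = γ)).filter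
      (fun e => v ∈ e)).card ≤ 1 := by
    intro v γ
    rw [Finset.card_le_one]
    intro e₁ h₁ e₂ h₂
    simp only [Finset.mem_filter] at h₁ h₂
    by_contra hne
    refine hc.2 e₁ (mem_edgeFinset.1 (hinsub K h₁.1.1)) e₂
      (mem_edgeFinset.1 (hinsub K h₂.1.1)) hne ⟨v, h₁.2, h₂.2⟩ ?_
    rw [h₁.1.2, h₂.1.2]
  have hexc := cc_excess K (fun e => c e = α) (fun e => c e = β) ?_ ?_
    (fun v => hone v α) (fun v => hone v β)
  rotate_left
  · intro e he
    have := (Finset.mem_filter.1 he).1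
    rw [mem_edgeFinset] at this
    exact (mem_kG_edgeSet.1 this).2
  · intro e ⟨h1, h2⟩
    exact hαβ (h1.symm.trans h2)
  have hKeq : ((insideF H K).filter (fun e => c e = α)).card =
      ((insideF H K).filter (fun e => c e = β)).card + 1 := by omega
  -- swap
  set c' := kSwap G c α β K with hc'def
  have hc' : ProperC G ℓ c' := kSwap_proper hα hβ hαβ hc
  -- pointwise description
  have hin : ∀ e ∈ insideF H K, c' e = if c e = α then β else α := by
    intro e he
    induction e using Sym2.ind with
    | _ a b =>
      have h1 : H.Adj a b := by
        have := (Finset.mem_filter.1 he).1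
        rw [mem_edgeFinset] at this
        exact H.mem_edgeSet.1 this
      exact kSwap_eq_flip h1 ((mem_insideF h1).1 he)
  have hout : ∀ e ∈ G.edgeFinset, e ∉ insideF H K → c' e = c e := by
    intro e heG he
    induction e using Sym2.ind with
    | _ a b =>
      refine kSwap_eq_self ?_
      rintro ⟨hadj, hK⟩
      exact he ((mem_insideF hadj).2 hK)
  -- new counts
  have hsplit : ∀ (d : Sym2 V → ℕ) (γ : ℕ), cnt G d γ =
      ((insideF H K).filter (fun e => d e = γ)).card +
      ((G.edgeFinset \ insideF H K).filter (fun e => d e = γ)).card := by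
    intro d γ
    rw [cnt, ← Finset.card_union_of_disjoint, ← Finset.filter_union,
      Finset.union_sdiff_of_subset (hinsub K)]
    exact Finset.disjoint_filter_filter (Finset.disjoint_sdiff)
  have hswapin : ∀ γ δ, γ = α ∧ δ = β ∨ γ = β ∧ δ = α →
      (insideF H K).filter (fun e => c' e = γ) =
      (insideF H K).filter (fun e => c e = δ) := by
    intro γ δ hgd
    ext e
    simp only [Finset.mem_filter, and_congr_right_iff]
    intro he
    rw [hin e he]
    have hcab : c e = α ∨ c e = β := by
      have := (Finset.mem_filter.1 he).1
      rw [mem_edgeFinset] at this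
      exact (mem_kG_edgeSet.1 this).2
    rcases hgd with ⟨rfl, rfl⟩ | ⟨rfl, rfl⟩
    · rcases hcab with h | h <;> simp [h, hαβ, Ne.symm hαβ]
    · rcases hcab with h | h <;> simp [h, hαβ, Ne.symm hαβ]
  have hswapout : ∀ γ, (G.edgeFinset \ insideF H K).filter (fun e => c' e = γ) =
      (G.edgeFinset \ insideF H K).filter (fun e => c e = γ) := by
    intro γ
    ext e
    simp only [Finset.mem_filter, Finset.mem_sdiff, and_congr_right_iff]
    rintro ⟨heG, hni⟩
    rw [hout e heG hni]
  have hcntα : cnt G c' α + 1 = cnt G c α := by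
    rw [hsplit c' α, hsplit c α, hswapout α, hswapin α β (Or.inl ⟨rfl, rfl⟩), hKeq]
    ring
  have hcntβ : cnt G c' β = cnt G c β + 1 := by
    rw [hsplit c' β, hsplit c β, hswapout β, hswapin β α (Or.inr ⟨rfl, rfl⟩), hKeq]
    ring
  have hcntother : ∀ γ, γ ≠ α → γ ≠ β → cnt G c' γ = cnt G c γ := by
    intro γ h1 h2
    rw [cnt, cnt]
    congr 1
    ext e
    simp only [Finset.mem_filter, and_congr_right_iff]
    intro he
    by_cases hi : e ∈ insideF H K
    · rw [hin e hi]
      have hcab : c e = α ∨ c e = β := by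
        have := (Finset.mem_filter.1 hi).1
        rw [mem_edgeFinset] at this
        exact (mem_kG_edgeSet.1 this).2
      rcases hcab with h | h <;> rw [h] <;>
        simp [hαβ, Ne.symm hαβ, h1, h2, Ne.symm h1, Ne.symm h2]
    · rw [hout e he hi]
  -- Φ decreases
  have hΦlt : Φ c' < Φ c := by
    have hmemα : α ∈ Finset.range ℓ := Finset.mem_range.2 hα
    have hmemβ : β ∈ (Finset.range ℓ).erase α := by
      rw [Finset.mem_erase]
      exact ⟨Ne.symm hαβ, Finset.mem_range.2 hβ⟩
    have hrest : ∑ γ ∈ ((Finset.range ℓ).erase α).erase β, (cnt G c' γ)^2 =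
        ∑ γ ∈ ((Finset.range ℓ).erase α).erase β, (cnt G c γ)^2 := by
      refine Finset.sum_congr rfl (fun γ hγ => ?_)
      rw [Finset.mem_erase, Finset.mem_erase] at hγ
      rw [hcntother γ hγ.2.1 hγ.1]
    have e1 : Φ c' = (cnt G c' α)^2 + ((cnt G c' β)^2 +
        ∑ γ ∈ ((Finset.range ℓ).erase α).erase β, (cnt G c' γ)^2) := by
      simp only [hΦdef]
      rw [← Finset.add_sum_erase _ _ hmemα, ← Finset.add_sum_erase _ _ hmemβ]
    have e2 : Φ c = (cnt G c α)^2 + ((cnt G c β)^2 +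
        ∑ γ ∈ ((Finset.range ℓ).erase α).erase β, (cnt G c γ)^2) := by
      simp only [hΦdef]
      rw [← Finset.add_sum_erase _ _ hmemα, ← Finset.add_sum_erase _ _ hmemβ]
    rw [e1, e2, hrest]
    have hab : cnt G c β + 2 ≤ cnt G c α := by omega
    obtain ⟨k, hk⟩ := Nat.exists_eq_add_of_le hab
    have ha' : cnt G c' α = cnt G c β + 1 + k := by omega
    have hb' : cnt G c' β = cnt G c β + 1 := hcntβ
    rw [ha', hb', hk]
    set b := cnt G c β
    have : (b+1+k)^2 + (b+1)^2 < (b+2+k)^2 + b^2 := by nlinarith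
    omega
  have hPP' : PP (Φ c') := ⟨c', hc', rfl⟩
  have := Nat.find_min hPPex (by omega : Φ c' < Nat.find hPPex) 
  exact this hPP'

end Balance


end Aux

theorem stmt10 {V : Type*} [Fintype V] (G : SimpleGraph V) (ℓ : ℕ)
    (hmax : ∀ v, (G.neighborSet v).ncard ≤ ℓ)
    (hacyclic : (G.induce {v | (G.neighborSet v).ncard = ℓ}).IsAcyclic) :
    ∃ f : Sym2 V → ℕ,
      (∀ e ∈ G.edgeSet, f e < ℓ) ∧
      (∀ e₁ ∈ G.edgeSet, ∀ e₂ ∈ G.edgeSet,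
        e₁ ≠ e₂ → (∃ v, v ∈ e₁ ∧ v ∈ e₂) → f e₁ ≠ f e₂) ∧
      ∀ i < ℓ, ∀ j < ℓ,
        {e ∈ G.edgeSet | f e = i}.ncard ≤ {e ∈ G.edgeSet | f e = j}.ncard + 1 := by
  obtain ⟨c, hc, hbal⟩ := balanced_exists (fournier_colorable ℓ G hmax hacyclic)
  refine ⟨c, hc.1, hc.2, ?_⟩
  intro i hi j hj
  have hconv : ∀ γ, {e ∈ G.edgeSet | c e = γ}.ncard = cnt G c γ := by
    intro γ
    rw [cnt, ← Set.ncard_coe_finset]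
    congr 1
    ext e
    simp only [Set.mem_setOf_eq, Finset.coe_filter, mem_edgeFinset]
  rw [hconv, hconv]
  exact hbal i hi j hj
end

section
/- Suppose a is an even nonnegative integer, c is a nonnegative integer with (a,c) ≠ (0,0), and w ≥ 6 is even. Define n and b to be the unique integers with a + 2c = n·w - 2b and 0 ≤ b ≤ (w-2)/2. If a + 2c is not congruent to 2 modulo w, and additionally c is not congruent to 2 modulo w/2 when a = 0, then there exist integers ℓ_1, ..., ℓ_n with ℓ_i ∈ {w/2, ..., w} for i ∈ {2, ..., n}, ℓ_1 ∈ {(w-2b)/2, ..., w-2b} \ {1, 2}, and ℓ_1 + ... + ℓ_n = a + c. -/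
lemma stmt14_aux (m : ℕ) : ∀ (n S : ℕ), m * n ≤ S → S ≤ 2 * m * n →
    ∃ f : Fin n → ℕ, (∑ i, f i = S) ∧ ∀ i, m ≤ f i ∧ f i ≤ 2 * m := by
  intro n
  induction n with
  | zero =>
    intro S h1 h2
    have hS : S = 0 := by simpa using h2
    subst hS
    exact ⟨fun _ => 0, by simp, fun i => i.elim0⟩
  | succ k ih =>
    intro S h1 h2
    have e1 : m * (k + 1) = m * k + m := by ring
    have e2 : 2 * m * (k + 1) = 2 * (m * k) + 2 * m := by ring
    have e3 : 2 * m * k = 2 * (m * k) := by ring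
    obtain ⟨K, hK⟩ : ∃ K, m * k = K := ⟨_, rfl⟩
    rw [e1, hK] at h1
    rw [e2, hK] at h2
    set v := min (2 * m) (S - K) with hvdef
    have hb1 : m ≤ v := by omega
    have hb2 : v ≤ 2 * m := by omega
    obtain ⟨f, hf, hfb⟩ := ih (S - v) (by rw [hK]; omega) (by rw [e3, hK]; omega)
    refine ⟨Fin.cases v f, ?_, ?_⟩
    · rw [Fin.sum_univ_succ]
      simp only [Fin.cases_zero, Fin.cases_succ]
      rw [hf]
      omega
    · intro i
      induction i using Fin.cases with
      | zero => simp only [Fin.cases_zero]; exact ⟨hb1, hb2⟩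
      | succ j => simp only [Fin.cases_succ]; exact hfb j

theorem stmt14 (a c w n b : ℕ) (ha : Even a) (hac : ¬ (a = 0 ∧ c = 0))
    (hw : 6 ≤ w) (hweven : Even w)
    (hnb : a + 2 * c + 2 * b = n * w) (hb : 2 * b + 2 ≤ w)
    (h1 : (a + 2 * c) % w ≠ 2)
    (h2 : a = 0 → c % (w / 2) ≠ 2) :
    ∃ ℓ : Fin n → ℕ, (∑ i, ℓ i = a + c) ∧
      ∀ i : Fin n,
        (i.val = 0 →
          (w - 2 * b) / 2 ≤ ℓ i ∧ ℓ i ≤ w - 2 * b ∧ ℓ i ≠ 1 ∧ ℓ i ≠ 2) ∧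
        (i.val ≠ 0 → w / 2 ≤ ℓ i ∧ ℓ i ≤ w) := by
  obtain ⟨m, hm⟩ := hweven
  subst hm
  obtain ⟨s, hs⟩ := ha
  subst hs
  have hm3 : 3 ≤ m := by omega
  rcases n with _ | k
  · exfalso
    rw [Nat.zero_mul] at hnb
    omega
  have e : (k + 1) * (m + m) = 2 * (k * m) + 2 * m := by ring
  rw [e] at hnb
  obtain ⟨K, hK⟩ : ∃ K, k * m = K := ⟨_, rfl⟩
  rw [hK] at hnb
  -- b + 2 ≤ m
  have hb2 : b + 2 ≤ m := by
    by_contra hcon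
    apply h1
    have hval : s + s + 2 * c = 2 + k * (m + m) := by
      have hkm : k * (m + m) = 2 * K := by rw [← hK]; ring
      omega
    rw [hval, Nat.add_mul_mod_self_right]
    exact Nat.mod_eq_of_lt (by omega)
  -- choose the first cycle length v
  have hv : ∃ v, m - b ≤ v ∧ v ≤ 2 * m - 2 * b ∧ 3 ≤ v ∧ v ≤ s + s + c ∧
      K ≤ s + s + c - v ∧ s + s + c - v ≤ 2 * K := by
    by_cases hcase : m ≤ b + s
    · exact ⟨2 * m - 2 * b, by omega, by omega, by omega, by omega, by omega, by omega⟩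
    · by_cases hzero : s = 0 ∧ b + 2 = m
      · exfalso
        apply h2 (by omega)
        have hm2 : (m + m) / 2 = m := by omega
        rw [hm2]
        have hcval : c = 2 + k * m := by omega
        rw [hcval, Nat.add_mul_mod_self_right]
        exact Nat.mod_eq_of_lt (by omega)
      · exact ⟨m - b + s, by omega, by omega, by omega, by omega, by omega, by omega⟩
  obtain ⟨v, hv1, hv2, hv3, hv4, hv5, hv6⟩ := hv
  obtain ⟨f, hf, hfb⟩ := stmt14_aux m k (s + s + c - v)
    (by rw [Nat.mul_comm, hK]; exact hv5)
    (by have : 2 * m * k = 2 * K := by rw [← hK]; ring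
        rw [this]; exact hv6)
  refine ⟨Fin.cases v f, ?_, ?_⟩
  · rw [Fin.sum_univ_succ]
    simp only [Fin.cases_zero, Fin.cases_succ]
    rw [hf]
    omega
  · intro i
    induction i using Fin.cases with
    | zero =>
      refine ⟨fun _ => ?_, fun h => absurd (Fin.val_zero _) h⟩
      simp only [Fin.cases_zero]
      refine ⟨by omega, by omega, by omega, by omega⟩
    | succ j =>
      refine ⟨fun h => ?_, fun _ => ?_⟩
      · exfalso
        simp [Fin.val_succ] at h
      · simp only [Fin.cases_succ]
        have := hfb j
        omega
end

section
/- Let U' and W be disjoint sets with |U'| = 2n ≥ 2 and |W| = w ≥ 6 even, let a be an even nonnegative integer and c a nonnegative integer with (a,c) ≠ (0,0), and let b satisfy a + 2c = n·w - 2b with 0 ≤ b ≤ (w-2)/2. Suppose ℓ_1, ..., ℓ_n are integers with ℓ_i ∈ {w/2, ..., w} for 2 ≤ i ≤ n, ℓ_1 ∈ {(w-2b)/2, ..., w-2b} \ {1,2}, and ℓ_1 + ... + ℓ_n = a + c. Then for any pairwise edge-disjoint cycles C_1, ..., C_n in the complete graph K_W with lengths ℓ_1, ..., ℓ_n, there exists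 a packing of K_{U',W} ∪ C_1 ∪ ... ∪ C_n with a cycles of length 3 and c cycles of length 5 whose uncovered edges form a subgraph of K_{U',W} isomorphic to K_{2,2b}. -/
open SimpleGraph Walk

section infra
variable {V : Type*} {G : SimpleGraph V}

lemma support_eq_map {u v : V} (p : G.Walk u v) :
    p.support = (List.range (p.length + 1)).map p.getVert := by
  induction p with
  | nil => simp [Walk.getVert]
  | cons h q ih =>
    rw [support_cons, ih, length_cons]
    conv_rhs => rw [List.range_succ_eq_map, List.map_cons, List.map_map]
    simp [Function.comp_def, getVert_cons_succ, getVert_zero]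

lemma edges_mem_iff {u v : V} (p : G.Walk u v) (e : Sym2 V) :
    e ∈ p.edges ↔ ∃ j < p.length, e = s(p.getVert j, p.getVert (j + 1)) := by
  induction p with
  | nil => simp
  | cons h q ih =>
    rw [edges_cons, List.mem_cons, ih]
    constructor
    · rintro (rfl | ⟨j, hj, rfl⟩)
      · exact ⟨0, by simp, by simp [getVert_cons_succ, getVert_zero]⟩
      · exact ⟨j + 1, by simpa using hj, by simp [getVert_cons_succ]⟩
    · rintro ⟨j, hj, rfl⟩
      cases j with
      | zero => left; simp [getVert_cons_succ, getVert_zero]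
      | succ j => right; exact ⟨j, by simpa using hj, by simp [getVert_cons_succ]⟩

lemma cycle_getVert_injOn {u : V} {p : G.Walk u u} (hp : p.IsCycle) :
    ∀ j ≤ p.length, ∀ k ≤ p.length, p.getVert j = p.getVert k →
      j = k ∨ (j = 0 ∧ k = p.length) ∨ (j = p.length ∧ k = 0) := by
  have hnd : p.support.tail.Nodup := hp.2
  have hs : p.support.tail = (List.range p.length).map (fun j => p.getVert (j + 1)) := by
    rw [support_eq_map]
    conv_lhs => rw [List.range_succ_eq_map, List.map_cons]
    simp [List.map_map, Function.comp_def]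
  rw [hs] at hnd
  have hinj : ∀ j < p.length, ∀ k < p.length, p.getVert (j + 1) = p.getVert (k + 1) → j = k := by
    intro j hj k hk he
    by_contra hne
    rw [List.nodup_map_iff_inj_on List.nodup_range] at hnd
    exact hne (hnd j (List.mem_range.2 hj) k (List.mem_range.2 hk) he)
  intro j hj k hk he
  rcases Nat.eq_zero_or_pos j with rfl | hj0
  · rcases Nat.eq_zero_or_pos k with rfl | hk0
    · left; rfl
    · right; left
      refine ⟨rfl, ?_⟩
      by_contra hkl
      have : p.getVert (p.length - 1 + 1) = p.getVert (k - 1 + 1) := by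
        rw [Nat.sub_add_cancel (by omega), Nat.sub_add_cancel hk0, getVert_length, ← he,
          getVert_zero]
      have := hinj _ (by have := hp.three_le_length; omega) _ (by omega) this
      omega
  · rcases Nat.eq_zero_or_pos k with rfl | hk0
    · right; right
      refine ⟨?_, rfl⟩
      by_contra hjl
      have : p.getVert (p.length - 1 + 1) = p.getVert (j - 1 + 1) := by
        rw [Nat.sub_add_cancel (by omega), Nat.sub_add_cancel hj0, getVert_length, he,
          getVert_zero]
      have := hinj _ (by have := hp.three_le_length; omega) _ (by omega) this
      omega
    · left
      have : p.getVert (j - 1 + 1) = p.getVert (k - 1 + 1) := by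
        rw [Nat.sub_add_cancel hj0, Nat.sub_add_cancel hk0]; exact he
      have := hinj _ (by omega) _ (by omega) this
      omega

end infra

lemma exists_enum {V : Type*} (S : Set V) (hS : S.Finite) (m : ℕ) (h : S.ncard = m) :
    ∃ f : Fin m → V, Function.Injective f ∧ Set.range f = S := by
  haveI := hS.fintype
  have hc : Fintype.card S = m := by
    rw [← h, Set.ncard_eq_toFinset_card']
    simp [Set.toFinset_card]
  refine ⟨Subtype.val ∘ (Fintype.equivFinOfCardEq hc).symm, ?_, ?_⟩
  · exact Subtype.val_injective.comp (Equiv.injective _)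
  · rw [Set.range_comp, Equiv.range_eq_univ, Set.image_univ, Subtype.range_coe]

/-- The complete bipartite graph between `A` and `B`, as a graph on the ambient type. -/
def bipGraph {V : Type*} (A B : Set V) : SimpleGraph V where
  Adj x y := x ≠ y ∧ ((x ∈ A ∧ y ∈ B) ∨ (x ∈ B ∧ y ∈ A))
  symm := by
    constructor
    rintro x y ⟨h, h' | h'⟩
    · exact ⟨h.symm, Or.inr ⟨h'.2, h'.1⟩⟩
    · exact ⟨h.symm, Or.inl ⟨h'.2, h'.1⟩⟩
  loopless := ⟨fun x ⟨h, _⟩ => h rfl⟩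

/-- The complete graph on the set `W`, as a graph on the ambient type. -/
def completeOn {V : Type*} (W : Set V) : SimpleGraph V where
  Adj x y := x ≠ y ∧ x ∈ W ∧ y ∈ W
  symm := ⟨fun x y ⟨h, h1, h2⟩ => ⟨h.symm, h2, h1⟩⟩
  loopless := ⟨fun x ⟨h, _⟩ => h rfl⟩

section builders
variable {V : Type*} {G : SimpleGraph V}

/-- triangle walk u → v → q → u -/
def triWalk {u v q : V} (h1 : G.Adj u v) (h2 : G.Adj v q) (h3 : G.Adj q u) : G.Walk u u :=
  Walk.cons h1 (Walk.cons h2 (Walk.cons h3 Walk.nil))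

def pentWalk {u v q' z q : V} (h1 : G.Adj u v) (h2 : G.Adj v q') (h3 : G.Adj q' z)
    (h4 : G.Adj z q) (h5 : G.Adj q u) : G.Walk u u :=
  Walk.cons h1 (Walk.cons h2 (Walk.cons h3 (Walk.cons h4 (Walk.cons h5 Walk.nil))))

@[simp] lemma triWalk_length {u v q : V} (h1 : G.Adj u v) (h2 : G.Adj v q) (h3 : G.Adj q u) :
    (triWalk h1 h2 h3).length = 3 := rfl

@[simp] lemma pentWalk_length {u v q' z q : V} (h1 : G.Adj u v) (h2 : G.Adj v q')
    (h3 : G.Adj q' z) (h4 : G.Adj z q) (h5 : G.Adj q u) :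
    (pentWalk h1 h2 h3 h4 h5).length = 5 := rfl

@[simp] lemma triWalk_edges {u v q : V} (h1 : G.Adj u v) (h2 : G.Adj v q) (h3 : G.Adj q u) :
    (triWalk h1 h2 h3).edges = [s(u, v), s(v, q), s(q, u)] := rfl

@[simp] lemma pentWalk_edges {u v q' z q : V} (h1 : G.Adj u v) (h2 : G.Adj v q')
    (h3 : G.Adj q' z) (h4 : G.Adj z q) (h5 : G.Adj q u) :
    (pentWalk h1 h2 h3 h4 h5).edges = [s(u, v), s(v, q'), s(q', z), s(z, q), s(q, u)] := rfl

lemma triWalk_isCycle {u v q : V} (h1 : G.Adj u v) (h2 : G.Adj v q) (h3 : G.Adj q u) :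
    (triWalk h1 h2 h3).IsCycle := by
  simp [triWalk, Walk.isCycle_def, Walk.isTrail_def, Sym2.eq, Sym2.rel_iff', h1.ne, h2.ne, h3.ne,
    h3.ne', h1.ne', h2.ne']

lemma pentWalk_isCycle {v1 v2 v3 v4 v5 : V} (h1 : G.Adj v1 v2) (h2 : G.Adj v2 v3)
    (h3 : G.Adj v3 v4) (h4 : G.Adj v4 v5) (h5 : G.Adj v5 v1) (d13 : v1 ≠ v3) (d14 : v1 ≠ v4)
    (d24 : v2 ≠ v4) (d25 : v2 ≠ v5) (d35 : v3 ≠ v5) :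
    (pentWalk h1 h2 h3 h4 h5).IsCycle := by
  simp [pentWalk, Walk.isCycle_def, Walk.isTrail_def, Sym2.eq, Sym2.rel_iff', h1.ne, h2.ne, h3.ne,
    h4.ne, h5.ne, h1.ne', h2.ne', h3.ne', h4.ne', h5.ne', d13, d14, d24, d25, d35, d13.symm,
    d14.symm, d24.symm, d25.symm, d35.symm]

end builders

lemma main15 {V : Type*} (U' W : Set V) (hdisj : Disjoint U' W)
    (n w a c b : ℕ) (hn : 0 < n) (hb2 : 2 * b ≤ w)
    (ℓ A C off : Fin n → ℕ)
    (hACl : ∀ i, A i + C i = ℓ i) (hAeven : ∀ i, A i % 2 = 0)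
    (hl3 : ∀ i, 3 ≤ ℓ i)
    (hoffC : ∀ i, off i + C i + ℓ i = w)
    (hoff : ∀ i : Fin n, off i = if i.val = 0 then 2 * b else 0)
    (hsA : ∑ i, A i = a) (hsC : ∑ i, C i = c)
    (g : Fin (2 * n) → V) (hginj : Function.Injective g) (hgrange : Set.range g = U')
    (x : Fin n → ℕ → V)
    (hxW : ∀ i j, j ≤ ℓ i → x i j ∈ W)
    (hxwrap : ∀ i, x i (ℓ i) = x i 0)
    (hxinj : ∀ i, ∀ j ≤ ℓ i, ∀ k ≤ ℓ i, x i j = x i k →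
      j = k ∨ (j = 0 ∧ k = ℓ i) ∨ (j = ℓ i ∧ k = 0))
    (y : Fin n → ℕ → V)
    (hyW : ∀ i t, t + ℓ i < w → y i t ∈ W)
    (hyx : ∀ i t, t + ℓ i < w → ∀ j ≤ ℓ i, x i j ≠ y i t)
    (hyinj : ∀ i t s, t + ℓ i < w → s + ℓ i < w → y i t = y i s → t = s)
    (hWcover : ∀ i : Fin n, ∀ v ∈ W, (∃ j < ℓ i, x i j = v) ∨ (∃ t, t + ℓ i < w ∧ y i t = v))
    (ES : Fin n → Set (Sym2 V))
    (hE : ∀ i, ES i = {e | ∃ j < ℓ i, e = s(x i j, x i (j + 1))})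
    (hedisjS : ∀ i j, i ≠ j → Disjoint (ES i) (ES j))
    (H : SimpleGraph V)
    (hH : H = SimpleGraph.fromEdgeSet ((bipGraph U' W).edgeSet ∪ ⋃ i, ES i)) :
    ∃ (pv : Fin (a + c) → V) (pc : ∀ i, H.Walk (pv i) (pv i)),
      (∀ i, (pc i).IsCycle) ∧
      (∀ i : Fin (a + c), (pc i).length = if i.val < a then 3 else 5) ∧
      (∀ i j, i ≠ j → ∀ e ∈ (pc i).edges, e ∉ (pc j).edges) ∧
      ∃ P Q : Set V, P.ncard = 2 ∧ Q.ncard = 2 * b ∧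
        ((P ⊆ U' ∧ Q ⊆ W) ∨ (P ⊆ W ∧ Q ⊆ U')) ∧
        H.edgeSet \ (⋃ i, {e | e ∈ (pc i).edges})
          = Set.image2 (fun x y => s(x, y)) P Q := by
  classical
  have hAl : ∀ i, A i ≤ ℓ i := fun i => by have := hACl i; omega
  have hlw : ∀ i, ℓ i ≤ w := fun i => by have := hoffC i; omega
  -- the two special vertices of each pair
  have hplt : ∀ (d : Bool) (i : Fin n), 2 * i.val + (cond d 1 0) < 2 * n := by
    intro d i; have := i.isLt; cases d <;> simp <;> omega
  set pP : Bool → Fin n → V := fun d i => g ⟨2 * i.val + (cond d 1 0), hplt d i⟩ with hpP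
  have hPU : ∀ d i, pP d i ∈ U' := by
    intro d i; rw [← hgrange]; exact ⟨_, rfl⟩
  have hUW_ne : ∀ u ∈ U', ∀ v ∈ W, u ≠ v := by
    intro u hu v hv h
    rw [h] at hu
    exact Set.disjoint_left.1 hdisj hu hv
  have hPinj : ∀ d i d' i', pP d i = pP d' i' → d = d' ∧ i = i' := by
    intro d i d' i' h
    have h2 := hginj h
    simp only [Fin.mk.injEq] at h2
    cases d <;> cases d' <;> simp only [cond_true, cond_false] at h2
    · exact ⟨rfl, Fin.ext (by omega)⟩
    · exact absurd h2 (by omega)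
    · exact absurd h2 (by omega)
    · exact ⟨rfl, Fin.ext (by omega)⟩
  -- adjacency facts
  have hadjUW : ∀ u ∈ U', ∀ v ∈ W, H.Adj u v := by
    intro u hu v hv
    rw [hH, fromEdgeSet_adj]
    refine ⟨Or.inl ?_, hUW_ne u hu v hv⟩
    rw [SimpleGraph.mem_edgeSet]
    exact ⟨hUW_ne u hu v hv, Or.inl ⟨hu, hv⟩⟩
  have hxne : ∀ i j, j < ℓ i → x i j ≠ x i (j + 1) := by
    intro i j hj he
    have h3 := hl3 i
    rcases hxinj i j (by omega) (j + 1) (by omega) he with h | h | h <;> omega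
  have hadjWW : ∀ i j, j < ℓ i → H.Adj (x i j) (x i (j + 1)) := by
    intro i j hj
    rw [hH, fromEdgeSet_adj]
    refine ⟨Or.inr (Set.mem_iUnion.2 ⟨i, ?_⟩), hxne i j hj⟩
    rw [hE]
    exact ⟨j, hj, rfl⟩
  -- pentagon outside vertices
  set yv : Fin n → ℕ → V := fun i j => y i (off i + (j - A i)) with hyv
  have hyvlt : ∀ i j, A i ≤ j → j < ℓ i → (off i + (j - A i)) + ℓ i < w := by
    intro i j h1 h2; have := hACl i; have := hoffC i; omega
  have hyvW : ∀ i j, A i ≤ j → j < ℓ i → yv i j ∈ W :=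
    fun i j h1 h2 => hyW _ _ (hyvlt i j h1 h2)
  have hTF : ∀ i, pP true i ≠ pP false i := by
    intro i h
    have := hginj h
    simp only [Fin.mk.injEq, cond_true, cond_false] at this
    omega
  -- coverage predicate
  set cov : Fin n → ℕ → Bool → V → Prop := fun i j d v =>
    (j < A i ∧ (j % 2 = 0 ↔ d = false) ∧ (v = x i j ∨ v = x i (j + 1))) ∨
    (A i ≤ j ∧ j < ℓ i ∧
      ((d = false ∧ v = x i j) ∨ (d = true ∧ v = x i (j + 1)) ∨ v = yv i j)) with hcov
  -- triangle apexes
  set qT : Fin n → ℕ → V := fun i j => pP (decide (j % 2 = 1)) i with hqT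
  have hqTU : ∀ i j, qT i j ∈ U' := fun i j => hPU _ i
  -- the pieces
  obtain ⟨pcw, hpcwdef⟩ :
      ∃ pcw : ∀ (i : Fin n) (j : ℕ), j < ℓ i → H.Walk (x i j) (x i j),
        ∀ i j (hj : j < ℓ i),
          pcw i j hj = if hA : j < A i then
            triWalk (hadjWW i j hj) ((hadjUW _ (hqTU i j) _ (hxW i (j+1) hj)).symm)
              (hadjUW _ (hqTU i j) _ (hxW i j hj.le))
          else
            pentWalk (hadjWW i j hj) ((hadjUW _ (hPU true i) _ (hxW i (j+1) hj)).symm)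
              (hadjUW _ (hPU true i) _ (hyvW i j (not_lt.1 hA) hj))
              ((hadjUW _ (hPU false i) _ (hyvW i j (not_lt.1 hA) hj)).symm)
              (hadjUW _ (hPU false i) _ (hxW i j hj.le)) :=
    ⟨_, fun i j hj => rfl⟩
  have hlenP : ∀ i j (hj : j < ℓ i), (pcw i j hj).length = if j < A i then 3 else 5 := by
    intro i j hj; rw [hpcwdef]
    split_ifs <;> simp
  have hedgesP : ∀ i j (hj : j < ℓ i), (pcw i j hj).edges =
      if j < A i then [s(x i j, x i (j+1)), s(x i (j+1), qT i j), s(qT i j, x i j)]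
      else [s(x i j, x i (j+1)), s(x i (j+1), pP true i), s(pP true i, yv i j),
        s(yv i j, pP false i), s(pP false i, x i j)] := by
    intro i j hj; rw [hpcwdef]
    split_ifs <;> simp
  have hcycP : ∀ i j (hj : j < ℓ i), (pcw i j hj).IsCycle := by
    intro i j hj; rw [hpcwdef]
    split_ifs with hA
    · exact triWalk_isCycle _ _ _
    · refine pentWalk_isCycle _ _ _ _ _ ?_ ?_ ?_ ?_ ?_
      · exact (hUW_ne _ (hPU true i) _ (hxW i j hj.le)).symm
      · exact hyx i _ (hyvlt i j (not_lt.1 hA) hj) j hj.le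
      · exact hyx i _ (hyvlt i j (not_lt.1 hA) hj) (j+1) hj
      · exact (hUW_ne _ (hPU false i) _ (hxW i (j+1) hj)).symm
      · exact (hTF i)
  have hqTeq : ∀ i j, j % 2 = 0 → qT i j = pP false i := by
    intro i j hp; rw [hqT]; simp [hp]
  have hqTeq' : ∀ i j, j % 2 = 1 → qT i j = pP true i := by
    intro i j hp; rw [hqT]; simp [hp]
  have hchar : ∀ i j (hj : j < ℓ i) e, e ∈ (pcw i j hj).edges ↔
      (e = s(x i j, x i (j+1)) ∨ ∃ d v, cov i j d v ∧ e = s(pP d i, v)) := by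
    intro i j hj e
    rw [hedgesP i j hj]
    split_ifs with hA
    · simp only [List.mem_cons, List.not_mem_nil, or_false]
      constructor
      · rintro (rfl | rfl | rfl)
        · exact Or.inl rfl
        · refine Or.inr ⟨decide (j % 2 = 1), x i (j+1), Or.inl ⟨hA, ?_, Or.inr rfl⟩, ?_⟩
          · rcases Nat.even_or_odd j with hp | hp
            · rw [Nat.even_iff] at hp; simp [hp]
            · rw [Nat.odd_iff] at hp; simp [hp]
          · rcases Nat.even_or_odd j with hp | hp
            · rw [Nat.even_iff] at hp
              have hd : (decide (j % 2 = 1)) = false := by simp [hp]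
              simp only [hqTeq i j hp, hd]
              try exact Sym2.eq_swap
            · rw [Nat.odd_iff] at hp
              have hd : (decide (j % 2 = 1)) = true := by simp [hp]
              simp only [hqTeq' i j hp, hd]
              try exact Sym2.eq_swap
        · refine Or.inr ⟨decide (j % 2 = 1), x i j, Or.inl ⟨hA, ?_, Or.inl rfl⟩, rfl⟩
          rcases Nat.even_or_odd j with hp | hp
          · rw [Nat.even_iff] at hp; simp [hp]
          · rw [Nat.odd_iff] at hp; simp [hp]
      · rintro (rfl | ⟨d, v, hc, rfl⟩)
        · exact Or.inl rfl
        · rw [hcov] at hc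
          rcases hc with ⟨_, hpar, hv | hv⟩ | ⟨hA', _, _⟩
          · subst hv
            cases d
            · have hp : j % 2 = 0 := hpar.2 rfl
              right; right
              simp only [hqTeq i j hp]
              try exact Sym2.eq_swap
            · have hp : ¬ (j % 2 = 0) := fun h => by simpa using hpar.1 h
              have hp' : j % 2 = 1 := by omega
              right; right
              simp only [hqTeq' i j hp']
              try exact Sym2.eq_swap
          · subst hv
            cases d
            · have hp : j % 2 = 0 := hpar.2 rfl
              right; left
              simp only [hqTeq i j hp]
              try exact Sym2.eq_swap
            · have hp : ¬ (j % 2 = 0) := fun h => by simpa using hpar.1 h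
              have hp' : j % 2 = 1 := by omega
              right; left
              simp only [hqTeq' i j hp']
              try exact Sym2.eq_swap
          · omega
    · simp only [List.mem_cons, List.not_mem_nil, or_false]
      have hA' : A i ≤ j := not_lt.1 hA
      constructor
      · rintro (rfl | rfl | rfl | rfl | rfl)
        · exact Or.inl rfl
        · exact Or.inr ⟨true, x i (j+1),
            Or.inr ⟨hA', hj, Or.inr (Or.inl ⟨rfl, rfl⟩)⟩, Sym2.eq_swap⟩
        · exact Or.inr ⟨true, yv i j, Or.inr ⟨hA', hj, Or.inr (Or.inr rfl)⟩, rfl⟩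
        · exact Or.inr ⟨false, yv i j, Or.inr ⟨hA', hj, Or.inr (Or.inr rfl)⟩, Sym2.eq_swap⟩
        · exact Or.inr ⟨false, x i j, Or.inr ⟨hA', hj, Or.inl ⟨rfl, rfl⟩⟩, rfl⟩
      · rintro (rfl | ⟨d, v, hc, rfl⟩)
        · exact Or.inl rfl
        · rw [hcov] at hc
          rcases hc with ⟨hA2, _, _⟩ | ⟨_, _, ⟨rfl, rfl⟩ | ⟨rfl, rfl⟩ | rfl⟩
          · omega
          · right; right; right; right
            rfl
          · right; left
            exact Sym2.eq_swap
          · cases d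
            · right; right; right; left
              exact Sym2.eq_swap
            · right; right; left
              rfl
  have covInj : ∀ (i : Fin n) (d : Bool) v j j', j < ℓ i → j' < ℓ i →
      cov i j d v → cov i j' d v → j = j' := by
    intro i d v j j' hj hj' h1 h2
    have hAe := hAeven i
    have hAli := hAl i
    have h3l := hl3 i
    have xx : ∀ m1 m2, m1 ≤ ℓ i → m2 ≤ ℓ i → x i m1 = x i m2 →
        m1 = m2 ∨ (m1 = 0 ∧ m2 = ℓ i) ∨ (m1 = ℓ i ∧ m2 = 0) :=
      fun m1 m2 a b e => hxinj i m1 a m2 b e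
    rw [hcov] at h1 h2
    cases d
    · rcases h1 with ⟨hA1, hp1, hv1 | hv1⟩ | ⟨hA1, hjx1, ⟨-, hv1⟩ | ⟨hd1, -⟩ | hv1⟩
      · rcases h2 with ⟨hA2, hp2, hv2 | hv2⟩ | ⟨hA2, hjx2, ⟨-, hv2⟩ | ⟨hd2, -⟩ | hv2⟩
        · simp at hp1
          simp at hp2
          rcases xx (j) (j') (by omega) (by omega) (hv1.symm.trans hv2) with h | ⟨h, h'⟩ | ⟨h, h'⟩ <;> omega
        · simp at hp1
          simp at hp2
          rcases xx (j) (j' + 1) (by omega) (by omega) (hv1.symm.trans hv2) with h | ⟨h, h'⟩ | ⟨h, h'⟩ <;> omega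
        · simp at hp1
          rcases xx (j) (j') (by omega) (by omega) (hv1.symm.trans hv2) with h | ⟨h, h'⟩ | ⟨h, h'⟩ <;> omega
        · simp at hd2
        · simp only [hyv] at hv2
          exact absurd (hv1.symm.trans hv2) (hyx i _ (hyvlt i j' hA2 hj') (j) (by omega))
      · rcases h2 with ⟨hA2, hp2, hv2 | hv2⟩ | ⟨hA2, hjx2, ⟨-, hv2⟩ | ⟨hd2, -⟩ | hv2⟩
        · simp at hp1
          simp at hp2
          rcases xx (j + 1) (j') (by omega) (by omega) (hv1.symm.trans hv2) with h | ⟨h, h'⟩ | ⟨h, h'⟩ <;> omega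
        · simp at hp1
          simp at hp2
          rcases xx (j + 1) (j' + 1) (by omega) (by omega) (hv1.symm.trans hv2) with h | ⟨h, h'⟩ | ⟨h, h'⟩ <;> omega
        · simp at hp1
          rcases xx (j + 1) (j') (by omega) (by omega) (hv1.symm.trans hv2) with h | ⟨h, h'⟩ | ⟨h, h'⟩ <;> omega
        · simp at hd2
        · simp only [hyv] at hv2
          exact absurd (hv1.symm.trans hv2) (hyx i _ (hyvlt i j' hA2 hj') (j + 1) (by omega))
      · rcases h2 with ⟨hA2, hp2, hv2 | hv2⟩ | ⟨hA2, hjx2, ⟨-, hv2⟩ | ⟨hd2, -⟩ | hv2⟩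
        · simp at hp2
          rcases xx (j) (j') (by omega) (by omega) (hv1.symm.trans hv2) with h | ⟨h, h'⟩ | ⟨h, h'⟩ <;> omega
        · simp at hp2
          rcases xx (j) (j' + 1) (by omega) (by omega) (hv1.symm.trans hv2) with h | ⟨h, h'⟩ | ⟨h, h'⟩ <;> omega
        · rcases xx (j) (j') (by omega) (by omega) (hv1.symm.trans hv2) with h | ⟨h, h'⟩ | ⟨h, h'⟩ <;> omega
        · simp at hd2
        · simp only [hyv] at hv2
          exact absurd (hv1.symm.trans hv2) (hyx i _ (hyvlt i j' hA2 hj') (j) (by omega))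
      · rcases h2 with ⟨hA2, hp2, hv2 | hv2⟩ | ⟨hA2, hjx2, ⟨-, hv2⟩ | ⟨hd2, -⟩ | hv2⟩
        · simp at hd1
        · simp at hd1
        · simp at hd1
        · simp at hd1
        · simp at hd1
      · rcases h2 with ⟨hA2, hp2, hv2 | hv2⟩ | ⟨hA2, hjx2, ⟨-, hv2⟩ | ⟨hd2, -⟩ | hv2⟩
        · simp only [hyv] at hv1
          exact absurd (hv2.symm.trans hv1) (hyx i _ (hyvlt i j hA1 hj) (j') (by omega))
        · simp only [hyv] at hv1
          exact absurd (hv2.symm.trans hv1) (hyx i _ (hyvlt i j hA1 hj) (j' + 1) (by omega))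
        · simp only [hyv] at hv1
          exact absurd (hv2.symm.trans hv1) (hyx i _ (hyvlt i j hA1 hj) (j') (by omega))
        · simp at hd2
        · simp only [hyv] at hv1 hv2
          have he := hyinj i _ _ (hyvlt i j hA1 hj) (hyvlt i j' hA2 hj') (hv1.symm.trans hv2)
          omega
    · rcases h1 with ⟨hA1, hp1, hv1 | hv1⟩ | ⟨hA1, hjx1, ⟨hd1, -⟩ | ⟨-, hv1⟩ | hv1⟩
      · rcases h2 with ⟨hA2, hp2, hv2 | hv2⟩ | ⟨hA2, hjx2, ⟨hd2, -⟩ | ⟨-, hv2⟩ | hv2⟩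
        · simp at hp1
          simp at hp2
          rcases xx (j) (j') (by omega) (by omega) (hv1.symm.trans hv2) with h | ⟨h, h'⟩ | ⟨h, h'⟩ <;> omega
        · simp at hp1
          simp at hp2
          rcases xx (j) (j' + 1) (by omega) (by omega) (hv1.symm.trans hv2) with h | ⟨h, h'⟩ | ⟨h, h'⟩ <;> omega
        · simp at hd2
        · simp at hp1
          rcases xx (j) (j' + 1) (by omega) (by omega) (hv1.symm.trans hv2) with h | ⟨h, h'⟩ | ⟨h, h'⟩ <;> omega
        · simp only [hyv] at hv2
          exact absurd (hv1.symm.trans hv2) (hyx i _ (hyvlt i j' hA2 hj') (j) (by omega))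
      · rcases h2 with ⟨hA2, hp2, hv2 | hv2⟩ | ⟨hA2, hjx2, ⟨hd2, -⟩ | ⟨-, hv2⟩ | hv2⟩
        · simp at hp1
          simp at hp2
          rcases xx (j + 1) (j') (by omega) (by omega) (hv1.symm.trans hv2) with h | ⟨h, h'⟩ | ⟨h, h'⟩ <;> omega
        · simp at hp1
          simp at hp2
          rcases xx (j + 1) (j' + 1) (by omega) (by omega) (hv1.symm.trans hv2) with h | ⟨h, h'⟩ | ⟨h, h'⟩ <;> omega
        · simp at hd2
        · simp at hp1
          rcases xx (j + 1) (j' + 1) (by omega) (by omega) (hv1.symm.trans hv2) with h | ⟨h, h'⟩ | ⟨h, h'⟩ <;> omega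
        · simp only [hyv] at hv2
          exact absurd (hv1.symm.trans hv2) (hyx i _ (hyvlt i j' hA2 hj') (j + 1) (by omega))
      · rcases h2 with ⟨hA2, hp2, hv2 | hv2⟩ | ⟨hA2, hjx2, ⟨hd2, -⟩ | ⟨-, hv2⟩ | hv2⟩
        · simp at hd1
        · simp at hd1
        · simp at hd1
        · simp at hd1
        · simp at hd1
      · rcases h2 with ⟨hA2, hp2, hv2 | hv2⟩ | ⟨hA2, hjx2, ⟨hd2, -⟩ | ⟨-, hv2⟩ | hv2⟩
        · simp at hp2
          rcases xx (j + 1) (j') (by omega) (by omega) (hv1.symm.trans hv2) with h | ⟨h, h'⟩ | ⟨h, h'⟩ <;> omega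
        · simp at hp2
          rcases xx (j + 1) (j' + 1) (by omega) (by omega) (hv1.symm.trans hv2) with h | ⟨h, h'⟩ | ⟨h, h'⟩ <;> omega
        · simp at hd2
        · rcases xx (j + 1) (j' + 1) (by omega) (by omega) (hv1.symm.trans hv2) with h | ⟨h, h'⟩ | ⟨h, h'⟩ <;> omega
        · simp only [hyv] at hv2
          exact absurd (hv1.symm.trans hv2) (hyx i _ (hyvlt i j' hA2 hj') (j + 1) (by omega))
      · rcases h2 with ⟨hA2, hp2, hv2 | hv2⟩ | ⟨hA2, hjx2, ⟨hd2, -⟩ | ⟨-, hv2⟩ | hv2⟩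
        · simp only [hyv] at hv1
          exact absurd (hv2.symm.trans hv1) (hyx i _ (hyvlt i j hA1 hj) (j') (by omega))
        · simp only [hyv] at hv1
          exact absurd (hv2.symm.trans hv1) (hyx i _ (hyvlt i j hA1 hj) (j' + 1) (by omega))
        · simp at hd2
        · simp only [hyv] at hv1
          exact absurd (hv2.symm.trans hv1) (hyx i _ (hyvlt i j hA1 hj) (j' + 1) (by omega))
        · simp only [hyv] at hv1 hv2
          have he := hyinj i _ _ (hyvlt i j hA1 hj) (hyvlt i j' hA2 hj') (hv1.symm.trans hv2)
          omega
  have covW : ∀ i j (d : Bool) v, j < ℓ i → cov i j d v → v ∈ W := by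
    intro i j d v hj hc
    rw [hcov] at hc
    rcases hc with ⟨hA1, -, rfl | rfl⟩ | ⟨hA1, hj1, ⟨-, rfl⟩ | ⟨-, rfl⟩ | rfl⟩
    · exact hxW i j hj.le
    · exact hxW i (j + 1) hj
    · exact hxW i j hj.le
    · exact hxW i (j + 1) hj
    · exact hyvW i j hA1 hj
  have hdisjP : ∀ i j (hj : j < ℓ i) i' j' (hj' : j' < ℓ i'), (i ≠ i' ∨ j ≠ j') →
      ∀ e, e ∈ (pcw i j hj).edges → e ∈ (pcw i' j' hj').edges → False := by
    intro i j hj i' j' hj' hne e he1 he2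
    rw [hchar i j hj] at he1
    rw [hchar i' j' hj'] at he2
    rcases he1 with rfl | ⟨d, v, hc, rfl⟩
    · rcases he2 with he | ⟨d, v, hc, he⟩
      · by_cases hii : i = i'
        · subst hii
          have hne' : j ≠ j' := by
            rcases hne with h | h
            · exact absurd rfl h
            · exact h
          have h3l := hl3 i
          rw [Sym2.eq_iff] at he
          rcases he with ⟨e1, e2⟩ | ⟨e1, e2⟩
          · rcases hxinj i j (by omega) j' (by omega) e1 with h1 | ⟨h1, h1'⟩ | ⟨h1, h1'⟩ <;>
              rcases hxinj i (j + 1) (by omega) (j' + 1) (by omega) e2 with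
                h2 | ⟨h2, h2'⟩ | ⟨h2, h2'⟩ <;> omega
          · rcases hxinj i j (by omega) (j' + 1) (by omega) e1 with h1 | ⟨h1, h1'⟩ | ⟨h1, h1'⟩ <;>
              rcases hxinj i (j + 1) (by omega) j' (by omega) e2 with
                h2 | ⟨h2, h2'⟩ | ⟨h2, h2'⟩ <;> omega
        · have m1 : s(x i j, x i (j + 1)) ∈ ES i := by
            rw [hE]; exact ⟨j, hj, rfl⟩
          have m2 : s(x i j, x i (j + 1)) ∈ ES i' := by
            rw [hE]; exact ⟨j', hj', he⟩
          exact Set.disjoint_left.1 (hedisjS i i' hii) m1 m2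
      · rw [Sym2.eq_iff] at he
        rcases he with ⟨e1, e2⟩ | ⟨e1, e2⟩
        · exact hUW_ne _ (hPU d i') _ (hxW i j hj.le) e1.symm
        · exact hUW_ne _ (hPU d i') _ (hxW i (j + 1) hj) e2.symm
    · rcases he2 with he | ⟨d', v', hc', he⟩
      · rw [Sym2.eq_iff] at he
        rcases he with ⟨e1, e2⟩ | ⟨e1, e2⟩
        · exact hUW_ne _ (hPU d i) _ (hxW i' j' hj'.le) e1
        · exact hUW_ne _ (hPU d i) _ (hxW i' (j' + 1) hj') e1
      · rw [Sym2.eq_iff] at he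
        rcases he with ⟨e1, e2⟩ | ⟨e1, e2⟩
        · obtain ⟨hd, hi⟩ := hPinj _ _ _ _ e1
          subst hd; subst hi; subst e2
          rcases hne with h | h
          · exact absurd rfl h
          · exact h (covInj i d v j j' hj hj' hc hc')
        · exact hUW_ne _ (hPU d i) _ (covW i' j' d' v' hj' hc') e1
  have hcover : ∀ (i : Fin n) (d : Bool) v, v ∈ W →
      (∃ j, ∃ hj : j < ℓ i, cov i j d v) ∨ (i.val = 0 ∧ ∃ t, t < 2 * b ∧ v = y i t) := by
    intro i d v hv
    have hAe := hAeven i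
    have hAli := hAl i
    have h3l := hl3 i
    rcases hWcover i v hv with ⟨m, hm, rfl⟩ | ⟨t, ht, rfl⟩
    · left
      cases d
      · by_cases h1 : m < A i
        · by_cases h2 : m % 2 = 0
          · exact ⟨m, by omega, Or.inl ⟨h1, by simp [h2], Or.inl rfl⟩⟩
          · refine ⟨m - 1, by omega, Or.inl ⟨by omega, by simp; omega, Or.inr ?_⟩⟩
            exact congrArg (x i) (by omega)
        · exact ⟨m, hm, Or.inr ⟨by omega, hm, Or.inl ⟨rfl, rfl⟩⟩⟩
      · by_cases h0 : m = 0
        · subst h0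
          by_cases hA : ℓ i - 1 < A i
          · refine ⟨ℓ i - 1, by omega, Or.inl ⟨hA, by simp; omega, Or.inr ?_⟩⟩
            have h4 : ℓ i - 1 + 1 = ℓ i := by omega
            rw [h4, hxwrap i]
          · refine ⟨ℓ i - 1, by omega, Or.inr ⟨by omega, by omega, Or.inr (Or.inl ⟨rfl, ?_⟩)⟩⟩
            have h4 : ℓ i - 1 + 1 = ℓ i := by omega
            rw [h4, hxwrap i]
        · by_cases h1 : m ≤ A i
          · by_cases h2 : m % 2 = 0
            · refine ⟨m - 1, by omega, Or.inl ⟨by omega, by simp; omega, Or.inr ?_⟩⟩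
              exact congrArg (x i) (by omega)
            · exact ⟨m, by omega, Or.inl ⟨by omega, by simp; omega, Or.inl rfl⟩⟩
          · refine ⟨m - 1, by omega, Or.inr ⟨by omega, by omega, Or.inr (Or.inl ⟨rfl, ?_⟩)⟩⟩
            exact congrArg (x i) (by omega)
    · by_cases hto : t < off i
      · right
        have hi0 : i.val = 0 := by
          by_contra h
          rw [hoff] at hto
          simp [h] at hto
        refine ⟨hi0, t, ?_, rfl⟩
        rw [hoff, if_pos hi0] at hto
        exact hto
      · left
        have hoffCi := hoffC i
        have hACi := hACl i
        refine ⟨A i + (t - off i), by omega, Or.inr ⟨by omega, by omega, Or.inr (Or.inr ?_)⟩⟩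
        simp only [hyv]
        exact congrArg (y i) (by omega)
  have hoff0 : off (⟨0, hn⟩ : Fin n) = 2 * b := by simp [hoff]
  have hbl : 2 * b + ℓ (⟨0, hn⟩ : Fin n) ≤ w := by
    have := hoffC (⟨0, hn⟩ : Fin n)
    omega
  have hnotinleave : ∀ i j (hj : j < ℓ i) (d : Bool) t, t < 2 * b →
      s(pP d ⟨0, hn⟩, y ⟨0, hn⟩ t) ∉ (pcw i j hj).edges := by
    intro i j hj d t ht hmem
    have ht' : t + ℓ (⟨0, hn⟩ : Fin n) < w := by omega
    rw [hchar i j hj] at hmem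
    rcases hmem with he | ⟨d', v, hc, he⟩
    · rw [Sym2.eq_iff] at he
      rcases he with ⟨e1, e2⟩ | ⟨e1, e2⟩
      · exact hUW_ne _ (hPU d _) _ (hxW i j hj.le) e1
      · exact hUW_ne _ (hPU d _) _ (hxW i (j + 1) hj) e1
    · rw [Sym2.eq_iff] at he
      rcases he with ⟨e1, e2⟩ | ⟨e1, e2⟩
      · obtain ⟨hd, hi⟩ := hPinj _ _ _ _ e1
        subst hd
        subst hi
        rw [hcov] at hc
        rcases hc with ⟨hA1, -, hveq | hveq⟩ | ⟨hA1, hj1, ⟨-, hveq⟩ | ⟨-, hveq⟩ | hveq⟩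
        · exact hyx _ t ht' j hj.le (hveq ▸ e2.symm)
        · exact hyx _ t ht' (j + 1) hj (hveq ▸ e2.symm)
        · exact hyx _ t ht' j hj.le (hveq ▸ e2.symm)
        · exact hyx _ t ht' (j + 1) hj (hveq ▸ e2.symm)
        · rw [hveq, hyv] at e2
          have := hyinj _ t _ ht' (hyvlt _ j hA1 hj) e2
          rw [hoff0] at this
          omega
      · exact hUW_ne _ (hPU d _) _ (covW i j d' v hj hc) e1
  -- global indexing
  have hcardA : Fintype.card ((i : Fin n) × Fin (A i)) = a := by
    simp [Fintype.card_sigma, hsA]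
  have hcardC : Fintype.card ((i : Fin n) × Fin (C i)) = c := by
    simp [Fintype.card_sigma, hsC]
  set eA : ((i : Fin n) × Fin (A i)) ≃ Fin a := Fintype.equivFinOfCardEq hcardA with heA
  set eC : ((i : Fin n) × Fin (C i)) ≃ Fin c := Fintype.equivFinOfCardEq hcardC with heC
  set eSum : Fin (a + c) ≃ ((i : Fin n) × Fin (A i)) ⊕ ((i : Fin n) × Fin (C i)) :=
    finSumFinEquiv.symm.trans (Equiv.sumCongr eA.symm eC.symm) with heSum
  set F : ((i : Fin n) × Fin (A i)) ⊕ ((i : Fin n) × Fin (C i)) → (i : Fin n) × ℕ :=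
    Sum.elim (fun z => ⟨z.fst, (z.snd : ℕ)⟩) (fun z => ⟨z.fst, A z.fst + (z.snd : ℕ)⟩) with hF
  have hFvalid : ∀ s, (F s).2 < ℓ (F s).1 := by
    rintro (⟨i, t⟩ | ⟨i, t⟩) <;> simp only [hF, Sum.elim_inl, Sum.elim_inr]
    · have := t.isLt; have := hAl i; omega
    · have := t.isLt; have := hACl i; omega
  have hFinj : Function.Injective F := by
    rintro s s' h
    rcases s with ⟨i, t⟩ | ⟨i, t⟩ <;> rcases s' with ⟨i', t'⟩ | ⟨i', t'⟩ <;>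
        simp only [hF, Sum.elim_inl, Sum.elim_inr] at h <;>
        have h1 : i = i' := congrArg Sigma.fst h
    · subst h1
      have h2 : (t : ℕ) = (t' : ℕ) := congrArg Sigma.snd h
      exact congrArg (fun t : Fin (A i) =>
        (Sum.inl ⟨i, t⟩ : ((i : Fin n) × Fin (A i)) ⊕ ((i : Fin n) × Fin (C i)))) (Fin.ext h2)
    · subst h1
      have h2 : (t : ℕ) = A i + (t' : ℕ) := congrArg Sigma.snd h
      have := t.isLt; omega
    · subst h1
      have h2 : A i + (t : ℕ) = (t' : ℕ) := congrArg Sigma.snd h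
      have := t'.isLt; omega
    · subst h1
      have h2 : A i + (t : ℕ) = A i + (t' : ℕ) := congrArg Sigma.snd h
      exact congrArg (fun t : Fin (C i) =>
        (Sum.inr ⟨i, t⟩ : ((i : Fin n) × Fin (A i)) ⊕ ((i : Fin n) × Fin (C i)))) (Fin.ext (by omega))
  set idx : Fin (a + c) → (i : Fin n) × ℕ := fun k => F (eSum k) with hidx
  have hidxinj : Function.Injective idx := by
    intro k k' h
    exact eSum.injective (hFinj h)
  have hidxvalid : ∀ k, (idx k).2 < ℓ (idx k).1 := fun k => hFvalid _
  have hidxlt : ∀ k : Fin (a + c), ((idx k).2 < A (idx k).1) ↔ (k : ℕ) < a := by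
    intro k
    simp only [hidx, heSum, Equiv.trans_apply]
    rcases h : finSumFinEquiv.symm k with k' | k'
    · have hk : (k : ℕ) < a := by
        have h2 : k = finSumFinEquiv (Sum.inl k') := by rw [← h, Equiv.apply_symm_apply]
        rw [h2, finSumFinEquiv_apply_left]
        simp
      simp only [Equiv.sumCongr_apply, Sum.map_inl, hF, Sum.elim_inl]
      exact iff_of_true (eA.symm k').snd.isLt hk
    · have hk : ¬ ((k : ℕ) < a) := by
        have h2 : k = finSumFinEquiv (Sum.inr k') := by rw [← h, Equiv.apply_symm_apply]
        rw [h2, finSumFinEquiv_apply_right]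
        simp
      simp only [Equiv.sumCongr_apply, Sum.map_inr, hF, Sum.elim_inr]
      exact iff_of_false (by omega) hk
  have hidxsurj : ∀ (i : Fin n) (j : ℕ), j < ℓ i → ∃ k, idx k = ⟨i, j⟩ := by
    intro i j hj
    by_cases hA : j < A i
    · refine ⟨eSum.symm (Sum.inl ⟨i, ⟨j, hA⟩⟩), ?_⟩
      simp only [hidx, Equiv.apply_symm_apply, hF, Sum.elim_inl]
    · refine ⟨eSum.symm (Sum.inr ⟨i, ⟨j - A i, by have := hACl i; omega⟩⟩), ?_⟩
      simp only [hidx, Equiv.apply_symm_apply, hF, Sum.elim_inr]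
      exact congrArg (Sigma.mk i) (by omega)
  have hcovered : ∀ (i : Fin n) (j : ℕ) (hj : j < ℓ i), ∀ e', e' ∈ (pcw i j hj).edges →
      ∃ k : Fin (a + c), e' ∈ (pcw (idx k).1 (idx k).2 (hidxvalid k)).edges := by
    intro i j hj e' he'
    obtain ⟨k, hk⟩ := hidxsurj i j hj
    have h1 : (idx k).1 = i := congrArg Sigma.fst hk
    have h2 : (idx k).2 = j := congrArg Sigma.snd hk
    refine ⟨k, ?_⟩
    rw [hchar _ _ (hidxvalid k), h1, h2]
    rw [hchar i j hj] at he'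
    exact he'
  -- final assembly
  refine ⟨fun k => x (idx k).1 (idx k).2, fun k => pcw (idx k).1 (idx k).2 (hidxvalid k),
    fun k => hcycP _ _ _, ?_, ?_, ?_⟩
  · intro k
    rw [hlenP _ _ (hidxvalid k)]
    exact if_congr (hidxlt k) rfl rfl
  · intro k k' hkk e he1 he2
    refine hdisjP _ _ (hidxvalid k) _ _ (hidxvalid k') ?_ e he1 he2
    by_contra hcon
    push_neg at hcon
    obtain ⟨h1, h2⟩ := hcon
    exact hkk (hidxinj (Sigma.ext h1 (heq_of_eq h2)))
  · refine ⟨{pP false ⟨0, hn⟩, pP true ⟨0, hn⟩}, {v | ∃ t, t < 2 * b ∧ v = y ⟨0, hn⟩ t},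
      ?_, ?_, Or.inl ⟨?_, ?_⟩, ?_⟩
    · exact Set.ncard_pair (fun h => hTF _ h.symm)
    · have hyinj0 : Function.Injective (fun t : Fin (2 * b) => y (⟨0, hn⟩ : Fin n) t.val) := by
        intro t t' h
        have := hyinj _ t.val t'.val (by have := t.isLt; omega) (by have := t'.isLt; omega) h
        exact Fin.ext this
      have hQ : {v | ∃ t, t < 2 * b ∧ v = y (⟨0, hn⟩ : Fin n) t}
          = (fun t : Fin (2 * b) => y (⟨0, hn⟩ : Fin n) t.val) '' Set.univ := by
        ext v
        simp only [Set.image_univ, Set.mem_range, Set.mem_setOf_eq]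
        constructor
        · rintro ⟨t, ht, rfl⟩
          exact ⟨⟨t, ht⟩, rfl⟩
        · rintro ⟨t, rfl⟩
          exact ⟨t.val, t.isLt, rfl⟩
      rw [hQ, Set.ncard_image_of_injective _ hyinj0, Set.ncard_univ, Nat.card_eq_fintype_card,
        Fintype.card_fin]
    · intro v hv
      simp only [Set.mem_insert_iff, Set.mem_singleton_iff] at hv
      rcases hv with rfl | rfl <;> exact hPU _ _
    · rintro v ⟨t, ht, rfl⟩
      exact hyW _ t (by omega)
    · ext e
      simp only [Set.mem_diff, Set.mem_iUnion, Set.mem_setOf_eq]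
      constructor
      · rintro ⟨heH, hecov⟩
        rw [hH, edgeSet_fromEdgeSet, Set.mem_diff] at heH
        obtain ⟨hmem, hnd⟩ := heH
        have key : ∀ u v, u ∈ U' → v ∈ W → ¬ (∃ k : Fin (a + c),
            s(u, v) ∈ (pcw (idx k).1 (idx k).2 (hidxvalid k)).edges) →
            s(u, v) ∈ Set.image2 (fun x y => s(x, y))
              {pP false (⟨0, hn⟩ : Fin n), pP true ⟨0, hn⟩}
              {v | ∃ t, t < 2 * b ∧ v = y (⟨0, hn⟩ : Fin n) t} := by
          intro u v hu hv hnc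
          rw [← hgrange] at hu
          obtain ⟨m, rfl⟩ := hu
          have him : m.val / 2 < n := by have := m.isLt; omega
          have hu' : g m = pP (decide (m.val % 2 = 1)) ⟨m.val / 2, him⟩ := by
            rw [hpP]
            refine congrArg g (Fin.ext ?_)
            by_cases hp : m.val % 2 = 1
            · simp [hp]; omega
            · simp [hp]; omega
          rcases hcover ⟨m.val / 2, him⟩ (decide (m.val % 2 = 1)) v hv with
            ⟨j, hj, hc⟩ | ⟨hi0, t, ht, hveq⟩
          · exfalso
            apply hnc
            have hmem2 : s(g m, v) ∈ (pcw ⟨m.val / 2, him⟩ j hj).edges := by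
              rw [hchar]
              exact Or.inr ⟨_, v, hc, by rw [hu']⟩
            exact hcovered _ _ hj _ hmem2
          · have hieq : (⟨m.val / 2, him⟩ : Fin n) = ⟨0, hn⟩ := Fin.ext hi0
            rw [Set.mem_image2]
            refine ⟨g m, ?_, v, ⟨t, ht, by rw [hveq, hieq]⟩, rfl⟩
            rw [hu', hieq]
            cases hdm : decide (m.val % 2 = 1) <;> simp
        rcases hmem with hbip | hcycE
        · obtain ⟨⟨u, v⟩, rfl⟩ := e.exists_rep
          rw [SimpleGraph.mem_edgeSet] at hbip
          obtain ⟨hne, hor⟩ := hbip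
          rcases hor with ⟨hu, hv⟩ | ⟨hu, hv⟩
          · exact key u v hu hv hecov
          · have hres := key v u hv hu ?_
            · rwa [Sym2.eq_swap] at hres
            · rintro ⟨k, hk⟩
              rw [Sym2.eq_swap] at hk
              exact hecov ⟨k, hk⟩
        · exfalso
          obtain ⟨i, hei⟩ := Set.mem_iUnion.1 hcycE
          rw [hE] at hei
          obtain ⟨j, hj, rfl⟩ := hei
          exact hecov (hcovered i j hj _ ((hchar i j hj _).2 (Or.inl rfl)))
      · rintro he
        rw [Set.mem_image2] at he
        obtain ⟨p, hp, q, ⟨t, ht, rfl⟩, rfl⟩ := he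
        have hpP' : ∃ d, p = pP d ⟨0, hn⟩ := by
          simp only [Set.mem_insert_iff, Set.mem_singleton_iff] at hp
          rcases hp with rfl | rfl
          exacts [⟨false, rfl⟩, ⟨true, rfl⟩]
        obtain ⟨d, rfl⟩ := hpP'
        have hyWt : y (⟨0, hn⟩ : Fin n) t ∈ W := hyW _ t (by omega)
        constructor
        · rw [hH, edgeSet_fromEdgeSet, Set.mem_diff]
          refine ⟨Or.inl ?_, ?_⟩
          · rw [SimpleGraph.mem_edgeSet]
            exact ⟨hUW_ne _ (hPU d _) _ hyWt, Or.inl ⟨hPU d _, hyWt⟩⟩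
          · simp only [Sym2.diagSet_eq_setOfPred_isDiag, Set.mem_setOf_eq, Sym2.isDiag_iff_proj_eq]
            exact hUW_ne _ (hPU d _) _ hyWt
        · rintro ⟨k, hk⟩
          exact hnotinleave _ _ (hidxvalid k) d t ht hk


theorem stmt15 {V : Type*} [Fintype V] (U' W : Set V) (hdisj : Disjoint U' W)
    (n w a c b : ℕ)
    (hU' : U'.ncard = 2 * n) (hW : W.ncard = w) (hw : 6 ≤ w) (hweven : Even w)
    (haeven : Even a) (hac : ¬ (a = 0 ∧ c = 0))
    (hnb : a + 2 * c + 2 * b = n * w) (hb : 2 * b + 2 ≤ w)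
    (ℓ : Fin n → ℕ) (hsum : ∑ i, ℓ i = a + c)
    (hℓ : ∀ i : Fin n,
      (i.val = 0 →
        (w - 2 * b) / 2 ≤ ℓ i ∧ ℓ i ≤ w - 2 * b ∧ ℓ i ≠ 1 ∧ ℓ i ≠ 2) ∧
      (i.val ≠ 0 → w / 2 ≤ ℓ i ∧ ℓ i ≤ w))
    (cv : Fin n → V) (cw : ∀ i, (completeOn W).Walk (cv i) (cv i))
    (hcyc : ∀ i, (cw i).IsCycle) (hlen : ∀ i, (cw i).length = ℓ i)
    (hedisj : ∀ i j, i ≠ j → ∀ e ∈ (cw i).edges, e ∉ (cw j).edges)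
    (H : SimpleGraph V)
    (hH : H = SimpleGraph.fromEdgeSet
      ((bipGraph U' W).edgeSet ∪ ⋃ i, {e | e ∈ (cw i).edges})) :
    ∃ (pv : Fin (a + c) → V) (pc : ∀ i, H.Walk (pv i) (pv i)),
      (∀ i, (pc i).IsCycle) ∧
      (∀ i : Fin (a + c), (pc i).length = if i.val < a then 3 else 5) ∧
      (∀ i j, i ≠ j → ∀ e ∈ (pc i).edges, e ∉ (pc j).edges) ∧
      ∃ P Q : Set V, P.ncard = 2 ∧ Q.ncard = 2 * b ∧
        ((P ⊆ U' ∧ Q ⊆ W) ∨ (P ⊆ W ∧ Q ⊆ U')) ∧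
        H.edgeSet \ (⋃ i, {e | e ∈ (pc i).edges})
          = Set.image2 (fun x y => s(x, y)) P Q := by
  classical
  -- basic numerics
  have hn : 0 < n := by
    rcases Nat.eq_zero_or_pos n with rfl | hn
    · exfalso
      simp only [Finset.univ_eq_empty, Finset.sum_empty] at hsum
      exact hac ⟨by omega, by omega⟩
    · exact hn
  have hweven' : w % 2 = 0 := Nat.even_iff.1 hweven
  have hl3 : ∀ i, 3 ≤ ℓ i := fun i => hlen i ▸ (hcyc i).three_le_length
  -- numeric functions
  set wi : Fin n → ℕ := fun i => if i.val = 0 then w - 2 * b else w with hwi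
  set A : Fin n → ℕ := fun i => 2 * ℓ i - wi i with hA
  set C : Fin n → ℕ := fun i => wi i - ℓ i with hC
  set off : Fin n → ℕ := fun i => if i.val = 0 then 2 * b else 0 with hoff
  have hbounds : ∀ i, ℓ i ≤ wi i ∧ wi i ≤ 2 * ℓ i ∧ wi i % 2 = 0 := by
    intro i
    obtain ⟨h0, h1⟩ := hℓ i
    by_cases hi : i.val = 0
    · obtain ⟨ha1, ha2, _, _⟩ := h0 hi
      simp only [hwi, hi, if_true]
      omega
    · obtain ⟨ha1, ha2⟩ := h1 hi
      simp only [hwi, hi, if_false]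
      omega
  have hACl : ∀ i, A i + C i = ℓ i := by
    intro i; have := hbounds i; simp only [hA, hC]; omega
  have hAeven : ∀ i, A i % 2 = 0 := by
    intro i; have := hbounds i; simp only [hA]; omega
  have hoffC : ∀ i, off i + C i + ℓ i = w := by
    intro i; have h := hbounds i
    by_cases hi : i.val = 0 <;>
      simp only [hoff, hC, hwi, if_pos, if_neg, hi, if_true, if_false] at h ⊢ <;> omega
  -- sums
  have hswi : ∑ i, wi i + 2 * b = n * w := by
    have h1 : ∀ i ∈ Finset.univ, wi i + off i = w := by
      intro i _; simp only [hwi, hoff]; split <;> omega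
    have h2 : ∑ i, (wi i + off i) = n * w := by
      rw [Finset.sum_congr rfl h1]
      simp [Finset.card_univ, mul_comm]
    rw [Finset.sum_add_distrib] at h2
    have h3 : ∑ i, off i = 2 * b := by
      have : ∀ i ∈ Finset.univ, off i = if i = (⟨0, hn⟩ : Fin n) then 2 * b else 0 := by
        intro i _
        simp only [hoff, Fin.ext_iff]
      rw [Finset.sum_congr rfl this, Finset.sum_ite_eq' Finset.univ]
      simp
    omega
  have hsA : ∑ i, A i = a := by
    have h1 : ∀ i ∈ Finset.univ, A i + wi i = 2 * ℓ i := by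
      intro i _; have := hbounds i; simp only [hA]; omega
    have h2 : ∑ i, (A i + wi i) = 2 * (a + c) := by
      rw [Finset.sum_congr rfl h1, ← Finset.mul_sum, hsum]
    rw [Finset.sum_add_distrib] at h2
    omega
  have hsC : ∑ i, C i = c := by
    have h1 : ∀ i ∈ Finset.univ, C i + ℓ i = wi i := by
      intro i _; have := hbounds i; simp only [hC]; omega
    have h2 : ∑ i, (C i + ℓ i) = ∑ i, wi i := Finset.sum_congr rfl h1
    rw [Finset.sum_add_distrib, hsum] at h2
    omega
  -- enumeration of U'
  obtain ⟨g, hginj, hgrange⟩ := exists_enum U' U'.toFinite (2 * n) hU'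
  -- cycle vertices
  set x : Fin n → ℕ → V := fun i j => (cw i).getVert j with hx
  have hxwrap : ∀ i, x i (ℓ i) = x i 0 := by
    intro i
    simp only [hx]
    rw [← hlen i, getVert_length, getVert_zero]
  have hxW : ∀ i j, j ≤ ℓ i → x i j ∈ W := by
    intro i j hj
    have hadj : ∀ k, k < ℓ i → (completeOn W).Adj (x i k) (x i (k + 1)) := by
      intro k hk
      exact (cw i).adj_getVert_succ (by rw [hlen]; exact hk)
    rcases Nat.lt_or_ge j (ℓ i) with h | h
    · exact (show x i j ≠ x i (j + 1) ∧ x i j ∈ W ∧ x i (j + 1) ∈ W from hadj j h).2.1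
    · have hj' : j = ℓ i := le_antisymm hj h
      rw [hj', hxwrap i]
      exact (show x i 0 ≠ x i (0 + 1) ∧ x i 0 ∈ W ∧ x i (0 + 1) ∈ W from hadj 0 (by have := hl3 i; omega)).2.1
  have hxinj : ∀ i, ∀ j ≤ ℓ i, ∀ k ≤ ℓ i, x i j = x i k →
      j = k ∨ (j = 0 ∧ k = ℓ i) ∨ (j = ℓ i ∧ k = 0) := by
    intro i j hj k hk he
    have := cycle_getVert_injOn (hcyc i) j (by rw [hlen]; exact hj) k (by rw [hlen]; exact hk) he
    rw [hlen] at this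
    exact this
  -- ranges
  set xR : Fin n → Set V := fun i => {v | ∃ j < ℓ i, x i j = v} with hxR
  have hxRW : ∀ i, xR i ⊆ W := by
    rintro i v ⟨j, hj, rfl⟩
    exact hxW i j (le_of_lt hj)
  have hxRcard : ∀ i, (xR i).ncard = ℓ i := by
    intro i
    have : xR i = Set.range (fun j : Fin (ℓ i) => x i j) := by
      ext v
      constructor
      · rintro ⟨j, hj, rfl⟩; exact ⟨⟨j, hj⟩, rfl⟩
      · rintro ⟨j, rfl⟩; exact ⟨j, j.isLt, rfl⟩
    rw [this, ← Set.image_univ, Set.ncard_image_of_injective _ ?_, Set.ncard_univ,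
      Nat.card_eq_fintype_card, Fintype.card_fin]
    intro j k h
    have := hxinj i j (le_of_lt j.isLt) k (le_of_lt k.isLt) h
    have hj := j.isLt; have hk := k.isLt
    exact Fin.ext (by omega)
  have hyex : ∀ i : Fin n, ∃ f : Fin (w - ℓ i) → V, Function.Injective f ∧
      Set.range f = W \ xR i := by
    intro i
    refine exists_enum _ (W.toFinite.subset Set.diff_subset) _ ?_
    rw [Set.ncard_diff (hxRW i) ((W.toFinite.subset (hxRW i))), hxRcard, hW]
  choose f hfinj hfrange using hyex
  set y : Fin n → ℕ → V := fun i t => if h : t < w - ℓ i then f i ⟨t, h⟩ else cv i with hy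
  have hymem : ∀ i t, t + ℓ i < w → y i t ∈ W \ xR i := by
    intro i t ht
    have h : t < w - ℓ i := by omega
    simp only [hy, dif_pos h]
    rw [← hfrange i]
    exact ⟨_, rfl⟩
  have hyW : ∀ i t, t + ℓ i < w → y i t ∈ W := fun i t ht => (hymem i t ht).1
  have hyx : ∀ i t, t + ℓ i < w → ∀ j ≤ ℓ i, x i j ≠ y i t := by
    intro i t ht j hj he
    have h2 := (hymem i t ht).2
    apply h2
    rcases Nat.lt_or_ge j (ℓ i) with h | h
    · exact ⟨j, h, he⟩
    · have : j = ℓ i := le_antisymm hj h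
      rw [this, hxwrap i] at he
      exact ⟨0, by have := hl3 i; omega, he⟩
  have hyinj : ∀ i t s, t + ℓ i < w → s + ℓ i < w → y i t = y i s → t = s := by
    intro i t s ht hs he
    have h1 : t < w - ℓ i := by omega
    have h2 : s < w - ℓ i := by omega
    simp only [hy, dif_pos h1, dif_pos h2] at he
    exact congrArg Fin.val (hfinj i he)
  have hWcover : ∀ i : Fin n, ∀ v ∈ W, (∃ j < ℓ i, x i j = v) ∨
      (∃ t, t + ℓ i < w ∧ y i t = v) := by
    intro i v hv
    by_cases hvx : v ∈ xR i
    · exact Or.inl hvx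
    · right
      have : v ∈ Set.range (f i) := by rw [hfrange i]; exact ⟨hv, hvx⟩
      obtain ⟨t, rfl⟩ := this
      have hlw : ℓ i ≤ w := by
        calc ℓ i = (xR i).ncard := (hxRcard i).symm
        _ ≤ W.ncard := Set.ncard_le_ncard (hxRW i) W.toFinite
        _ = w := hW
      refine ⟨t, by have := t.isLt; omega, ?_⟩
      simp only [hy, dif_pos t.isLt]
  -- edge sets
  have hE : ∀ i, {e | e ∈ (cw i).edges} = {e : Sym2 V | ∃ j < ℓ i, e = s(x i j, x i (j + 1))} := by
    intro i
    ext e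
    rw [Set.mem_setOf_eq, Set.mem_setOf_eq, edges_mem_iff, hlen]
  have hedisjS : ∀ i j : Fin n, i ≠ j →
      Disjoint {e | e ∈ (cw i).edges} {e | e ∈ (cw j).edges} := by
    intro i j hij
    rw [Set.disjoint_left]
    intro e he
    exact hedisj i j hij e he
  exact main15 U' W hdisj n w a c b hn (by omega) ℓ A C off hACl hAeven hl3 hoffC
    (fun i => rfl) hsA hsC g hginj hgrange x hxW hxwrap hxinj y hyW hyx hyinj hWcover
    (fun i => {e | e ∈ (cw i).edges}) hE hedisjS H hH
end
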